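/- arXiv:2309.07962 — 4 statements merged into one kernel-verified Lean document; each statement's English description precedes it below -/
import Mathlib

section
/- Let K be a commutative ring and A a nonunital associative K-algebra, regarded as an alternative algebra. Then there is a surjective homomorphism of unital K-algebras U_Alt(A) → (A₊)ᵒᵖ ⊗_K A₊ carrying the class of l_a to aᵒᵖ ⊗ 1 and the class of r_b to 1 ⊗ b, where A₊ is the unitization of A. -/
noncomputable section

open scoped TensorProduct

/-- `l_a ∈ Tens_R(A ⊕ A)`. -/
def lT (R A : Type) [CommRing R] [NonUnitalNonAssocRing A] [Module R A] (a : A) :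
    TensorAlgebra R (A × A) :=
  TensorAlgebra.ι R (a, 0)

/-- `r_a ∈ Tens_R(A ⊕ A)`. -/
def rT (R A : Type) [CommRing R] [NonUnitalNonAssocRing A] [Module R A] (a : A) :
    TensorAlgebra R (A × A) :=
  TensorAlgebra.ι R (0, a)

/-- The relations defining the alternative universal enveloping algebra `U_Alt(A)`:
quotienting `Tens_R(A ⊕ A)` by this relation is the same as quotienting by the two-sided
ideal generated by `l_{aa} − l_a·l_a`, `r_{bb} − r_b·r_b`,
`(l_{ab} − l_b·l_a) − (r_b·l_a − l_a·r_b)` and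
`(r_b·l_a − l_a·r_b) − (r_a·r_b − r_{ab})` for all `a, b ∈ A`. -/
inductive AltRel (R A : Type) [CommRing R] [NonUnitalNonAssocRing A] [Module R A] :
    TensorAlgebra R (A × A) → TensorAlgebra R (A × A) → Prop
  | lsq (a : A) : AltRel R A (lT R A (a * a)) (lT R A a * lT R A a)
  | rsq (b : A) : AltRel R A (rT R A (b * b)) (rT R A b * rT R A b)
  | lmid (a b : A) : AltRel R A (lT R A (a * b) - lT R A b * lT R A a)
      (rT R A b * lT R A a - lT R A a * rT R A b)
  | rmid (a b : A) : AltRel R A (rT R A b * lT R A a - lT R A a * rT R A b)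
      (rT R A a * rT R A b - rT R A (a * b))

/-- The alternative universal enveloping algebra `U_Alt(A)`. -/
def UAlt (R A : Type) [CommRing R] [NonUnitalNonAssocRing A] [Module R A] : Type :=
  RingQuot (AltRel R A)

instance (R A : Type) [CommRing R] [NonUnitalNonAssocRing A] [Module R A] :
    Ring (UAlt R A) :=
  inferInstanceAs (Ring (RingQuot (AltRel R A)))

instance (R A : Type) [CommRing R] [NonUnitalNonAssocRing A] [Module R A] :
    Algebra R (UAlt R A) :=
  inferInstanceAs (Algebra R (RingQuot (AltRel R A)))

/-- The image of `l_a` in `U_Alt(A)`. -/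
def lUAlt (R A : Type) [CommRing R] [NonUnitalNonAssocRing A] [Module R A] (a : A) :
    UAlt R A :=
  RingQuot.mkAlgHom R (AltRel R A) (lT R A a)

/-- The image of `r_a` in `U_Alt(A)`. -/
def rUAlt (R A : Type) [CommRing R] [NonUnitalNonAssocRing A] [Module R A] (a : A) :
    UAlt R A :=
  RingQuot.mkAlgHom R (AltRel R A) (rT R A a)


variable (K A : Type) [CommRing K] [NonUnitalRing A] [Module K A]
    [IsScalarTower K A A] [SMulCommClass K A A]

/-- The linear map `(a, b) ↦ aᵒᵖ ⊗ 1 + 1 ⊗ b`. -/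
def gMap : (A × A) →ₗ[K] (Unitization K A)ᵐᵒᵖ ⊗[K] Unitization K A where
  toFun p := MulOpposite.op (p.1 : Unitization K A) ⊗ₜ[K] 1 + 1 ⊗ₜ[K] (p.2 : Unitization K A)
  map_add' p q := by
    simp only [Prod.fst_add, Prod.snd_add, Unitization.inr_add, MulOpposite.op_add,
      TensorProduct.add_tmul, TensorProduct.tmul_add]
    abel
  map_smul' c p := by
    simp only [Prod.smul_fst, Prod.smul_snd, Unitization.inr_smul, MulOpposite.op_smul,
      TensorProduct.smul_tmul', TensorProduct.tmul_smul, RingHom.id_apply, smul_add]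

/-- The lift of `gMap` to the tensor algebra. -/
def phiMap : TensorAlgebra K (A × A) →ₐ[K] (Unitization K A)ᵐᵒᵖ ⊗[K] Unitization K A :=
  TensorAlgebra.lift K (gMap K A)

theorem phiMap_l (a : A) :
    phiMap K A (lT K A a) = MulOpposite.op (a : Unitization K A) ⊗ₜ[K] 1 := by
  simp [phiMap, lT, gMap, TensorAlgebra.lift_ι_apply]

theorem phiMap_r (b : A) :
    phiMap K A (rT K A b) = 1 ⊗ₜ[K] (b : Unitization K A) := by
  simp [phiMap, rT, gMap, TensorAlgebra.lift_ι_apply]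

theorem phiMap_rel : ∀ ⦃x y : TensorAlgebra K (A × A)⦄, AltRel K A x y →
    phiMap K A x = phiMap K A y := by
  intro x y h
  induction h with
  | lsq a =>
      simp only [map_mul, phiMap_l, Algebra.TensorProduct.tmul_mul_tmul, one_mul,
        ← MulOpposite.op_mul, ← Unitization.inr_mul]
  | rsq b =>
      simp only [map_mul, phiMap_r, Algebra.TensorProduct.tmul_mul_tmul, one_mul,
        ← Unitization.inr_mul]
  | lmid a b =>
      simp only [map_sub, map_mul, phiMap_l, phiMap_r,
        Algebra.TensorProduct.tmul_mul_tmul, one_mul, mul_one,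
        ← MulOpposite.op_mul, ← Unitization.inr_mul, sub_self]
  | rmid a b =>
      simp only [map_sub, map_mul, phiMap_l, phiMap_r,
        Algebra.TensorProduct.tmul_mul_tmul, one_mul, mul_one,
        ← Unitization.inr_mul, sub_self]

/-- For a nonunital associative `K`-algebra `A`, there is a surjection of unital
`K`-algebras `U_Alt(A) → (A₊)ᵒᵖ ⊗_K A₊` with `l_a ↦ aᵒᵖ ⊗ 1` and `r_b ↦ 1 ⊗ b`. -/
theorem uAlt_to_uAss_surjective (K A : Type) [CommRing K] [NonUnitalRing A] [Module K A]
    [IsScalarTower K A A] [SMulCommClass K A A] :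
    ∃ f : UAlt K A →ₐ[K] (Unitization K A)ᵐᵒᵖ ⊗[K] Unitization K A,
      Function.Surjective f ∧
      (∀ a : A, f (lUAlt K A a) = MulOpposite.op (a : Unitization K A) ⊗ₜ[K] 1) ∧
      (∀ b : A, f (rUAlt K A b) = 1 ⊗ₜ[K] (b : Unitization K A)) := by
  refine ⟨RingQuot.liftAlgHom K ⟨phiMap K A, phiMap_rel K A⟩, ?_, ?_, ?_⟩
  · set f := RingQuot.liftAlgHom K (s := AltRel K A) ⟨phiMap K A, phiMap_rel K A⟩ with hf
    have hl : ∀ a : A, (MulOpposite.op (a : Unitization K A) ⊗ₜ[K]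
        (1 : Unitization K A)) ∈ f.range := by
      intro a
      exact ⟨lUAlt K A a, (RingQuot.liftAlgHom_mkAlgHom_apply K (phiMap K A)
        (phiMap_rel K A) (lT K A a)).trans (phiMap_l K A a)⟩
    have hr : ∀ b : A, ((1 : (Unitization K A)ᵐᵒᵖ) ⊗ₜ[K]
        (b : Unitization K A)) ∈ f.range := by
      intro b
      exact ⟨rUAlt K A b, (RingQuot.liftAlgHom_mkAlgHom_apply K (phiMap K A)
        (phiMap_rel K A) (rT K A b)).trans (phiMap_r K A b)⟩
    intro z
    suffices h : z ∈ f.range by exact h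
    induction z using TensorProduct.induction_on with
    | zero => exact zero_mem _
    | add x y hx hy => exact add_mem hx hy
    | tmul x y =>
        obtain ⟨x⟩ := x
        have hx : MulOpposite.op x ⊗ₜ[K] (1 : Unitization K A) ∈ f.range := by
          induction x using Unitization.ind with
          | inl_add_inr k a =>
            rw [MulOpposite.op_add, TensorProduct.add_tmul]
            refine add_mem ?_ (hl a)
            have : (MulOpposite.op (Unitization.inl k : Unitization K A)) ⊗ₜ[K]
                (1 : Unitization K A) =
                algebraMap K ((Unitization K A)ᵐᵒᵖ ⊗[K] Unitization K A) k := by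
              have h1 : (Unitization.inl k : Unitization K A) = k • 1 := by
                rw [← Unitization.algebraMap_eq_inl, Algebra.algebraMap_eq_smul_one]
              rw [h1, Algebra.algebraMap_eq_smul_one]
              simp [TensorProduct.smul_tmul', Algebra.TensorProduct.one_def]
            rw [this]
            exact Subalgebra.algebraMap_mem _ k
        have hy : (1 : (Unitization K A)ᵐᵒᵖ) ⊗ₜ[K] y ∈ f.range := by
          induction y using Unitization.ind with
          | inl_add_inr k b =>
            rw [TensorProduct.tmul_add]
            refine add_mem ?_ (hr b)
            have : (1 : (Unitization K A)ᵐᵒᵖ) ⊗ₜ[K] (Unitization.inl k : Unitization K A) =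
                algebraMap K ((Unitization K A)ᵐᵒᵖ ⊗[K] Unitization K A) k := by
              have h1 : (Unitization.inl k : Unitization K A) = k • 1 := by
                rw [← Unitization.algebraMap_eq_inl, Algebra.algebraMap_eq_smul_one]
              rw [h1, Algebra.algebraMap_eq_smul_one]
              simp [TensorProduct.tmul_smul, Algebra.TensorProduct.one_def]
            rw [this]
            exact Subalgebra.algebraMap_mem _ k
        have := mul_mem hx hy
        rw [Algebra.TensorProduct.tmul_mul_tmul, mul_one, one_mul] at this
        exact this
  · intro a
    exact (RingQuot.liftAlgHom_mkAlgHom_apply K (phiMap K A) (phiMap_rel K A)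
      (lT K A a)).trans (phiMap_l K A a)
  · intro b
    exact (RingQuot.liftAlgHom_mkAlgHom_apply K (phiMap K A) (phiMap_rel K A)
      (rT K A b)).trans (phiMap_r K A b)


end
end

section
/- Let K be a commutative ring and A an alternative K-algebra (a K-module with a K-bilinear product satisfying (xx)y = x(xy) and (xy)y = x(yy)) which is free of rank n as a K-module. Then U_Alt(A) admits a set of K-module generators with at most 2·2^n + (n² + n − 2)/2 elements; that is, there is a finite subset S of U_Alt(A) with card(S) ≤ 2·2^n + (n² + n − 2)/2 whose K-linear span is all of U_Alt(A). -/
noncomputable section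

open scoped TensorProduct

namespace UAltProof

variable (K A : Type) [CommRing K] [NonUnitalNonAssocRing A] [Module K A]

/-- `l` as a linear map. -/
def lmf : A →ₗ[K] UAlt K A :=
  (RingQuot.mkAlgHom K (AltRel K A)).toLinearMap ∘ₗ (TensorAlgebra.ι K) ∘ₗ (LinearMap.inl K A A)

def rmf : A →ₗ[K] UAlt K A :=
  (RingQuot.mkAlgHom K (AltRel K A)).toLinearMap ∘ₗ (TensorAlgebra.ι K) ∘ₗ (LinearMap.inr K A A)

lemma lmf_eq (a : A) : lmf K A a = lUAlt K A a := rfl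
lemma rmf_eq (a : A) : rmf K A a = rUAlt K A a := rfl

variable {K A}

lemma rel_lsq (a : A) : lmf K A (a * a) = lmf K A a * lmf K A a := by
  have h := RingQuot.mkAlgHom_rel K (AltRel.lsq (R := K) (A := A) a)
  simp only [lmf_eq, lUAlt, map_mul] at h ⊢
  exact h

lemma rel_rsq (a : A) : rmf K A (a * a) = rmf K A a * rmf K A a := by
  have h := RingQuot.mkAlgHom_rel K (AltRel.rsq (R := K) (A := A) a)
  simp only [rmf_eq, rUAlt, map_mul] at h ⊢
  exact h

lemma d3eq (a b : A) :
    lmf K A (a * b) - lmf K A b * lmf K A a -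
      (rmf K A b * lmf K A a - lmf K A a * rmf K A b) = 0 := by
  have h := RingQuot.mkAlgHom_rel K (AltRel.lmid (R := K) (A := A) a b)
  simp only [map_sub, map_mul] at h
  rw [sub_eq_zero]
  simp only [lmf_eq, rmf_eq, lUAlt, rUAlt]
  exact h

lemma d4eq (a b : A) :
    (rmf K A b * lmf K A a - lmf K A a * rmf K A b) -
      (rmf K A a * rmf K A b - rmf K A (a * b)) = 0 := by
  have h := RingQuot.mkAlgHom_rel K (AltRel.rmid (R := K) (A := A) a b)
  simp only [map_sub, map_mul] at h
  rw [sub_eq_zero]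
  simp only [lmf_eq, rmf_eq, lUAlt, rUAlt]
  exact h


lemma cyc (x y z : A) :
    lmf K A x * lmf K A y * rmf K A z - lmf K A z * lmf K A x * rmf K A y =
      lmf K A (y * x) * rmf K A z + rmf K A ((y * x) * z) + lmf K A ((y * x) * z) - lmf K A z * lmf K A (y * x) - rmf K A (y * (x * z)) - lmf K A (y * (x * z)) + lmf K A (x * z) * lmf K A y - lmf K A (x * z) * rmf K A y - lmf K A ((x * z) * y) + lmf K A y * lmf K A (x * z) + lmf K A z * lmf K A (x * y) - lmf K A z * lmf K A y * lmf K A x + lmf K A (z * y) * lmf K A x - lmf K A y * lmf K A z * lmf K A x := by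
  refine eq_of_sub_eq_zero ?_
  have c : (lmf K A x * lmf K A y * rmf K A z - lmf K A z * lmf K A x * rmf K A y) -
      (lmf K A (y * x) * rmf K A z + rmf K A ((y * x) * z) + lmf K A ((y * x) * z) - lmf K A z * lmf K A (y * x) - rmf K A (y * (x * z)) - lmf K A (y * (x * z)) + lmf K A (x * z) * lmf K A y - lmf K A (x * z) * rmf K A y - lmf K A ((x * z) * y) + lmf K A y * lmf K A (x * z) + lmf K A z * lmf K A (x * y) - lmf K A z * lmf K A y * lmf K A x + lmf K A (z * y) * lmf K A x - lmf K A y * lmf K A z * lmf K A x) =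
      -((lmf K A (y * x) - lmf K A x * lmf K A y - (rmf K A x * lmf K A y - lmf K A y * rmf K A x)) + ((rmf K A x * lmf K A y - lmf K A y * rmf K A x) - (rmf K A y * rmf K A x - rmf K A (y * x)))) * rmf K A z - ((lmf K A ((y * x) * z) - lmf K A z * lmf K A (y * x) - (rmf K A z * lmf K A (y * x) - lmf K A (y * x) * rmf K A z)) + ((rmf K A z * lmf K A (y * x) - lmf K A (y * x) * rmf K A z) - (rmf K A (y * x) * rmf K A z - rmf K A ((y * x) * z)))) + rmf K A y * ((lmf K A (x * z) - lmf K A z * lmf K A x - (rmf K A z * lmf K A x - lmf K A x * rmf K A z)) + ((rmf K A z * lmf K A x - lmf K A x * rmf K A z) - (rmf K A x * rmf K A z - rmf K A (x * z)))) + ((lmf K A (y * (x * z)) - lmf K A (x * z) * lmf K A y - (rmf K A (x * z) * lmf K A y - lmf K A y * rmf K A (x * z))) + ((rmf K A (x * z) * lmf K A y - lmf K A y * rmf K A (x * z)) - (rmf K A y * rmf K A (x * z) - rmf K A (y * (x * z))))) + (lmf K A ((x * z) * y) - lmf K A y * lmf K A (x * z) - (rmf K A y * lmf K A (x * z) - lmf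 K A (x * z) * rmf K A y)) - (lmf K A (z * y) - lmf K A y * lmf K A z - (rmf K A y * lmf K A z - lmf K A z * rmf K A y)) * lmf K A x - lmf K A z * (lmf K A (x * y) - lmf K A y * lmf K A x - (rmf K A y * lmf K A x - lmf K A x * rmf K A y)) := by
    noncomm_ring
  rw [c, d3eq y x, d4eq y x, d3eq (y*x) z, d4eq (y*x) z, d3eq x z, d4eq x z,
    d3eq y (x*z), d4eq y (x*z), d3eq (x*z) y, d3eq z y, d3eq x y]
  simp


/-- `r b * l a` rewrite (push `r` to the right). -/
lemma rl_eq (a b : A) :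
    rmf K A b * lmf K A a =
      lmf K A a * rmf K A b + lmf K A (a * b) - lmf K A b * lmf K A a := by
  refine eq_of_sub_eq_zero ?_
  have c : rmf K A b * lmf K A a -
      (lmf K A a * rmf K A b + lmf K A (a * b) - lmf K A b * lmf K A a) =
      -(lmf K A (a * b) - lmf K A b * lmf K A a -
        (rmf K A b * lmf K A a - lmf K A a * rmf K A b)) := by noncomm_ring
  rw [c, d3eq a b, neg_zero]

/-- `r a * r b` rewrite. -/
lemma rr_eq (a b : A) :
    rmf K A a * rmf K A b =
      rmf K A (a * b) + lmf K A (a * b) - lmf K A b * lmf K A a := by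
  refine eq_of_sub_eq_zero ?_
  have c : rmf K A a * rmf K A b -
      (rmf K A (a * b) + lmf K A (a * b) - lmf K A b * lmf K A a) =
      -((lmf K A (a * b) - lmf K A b * lmf K A a -
          (rmf K A b * lmf K A a - lmf K A a * rmf K A b)) +
        ((rmf K A b * lmf K A a - lmf K A a * rmf K A b) -
          (rmf K A a * rmf K A b - rmf K A (a * b)))) := by noncomm_ring
  rw [c, d3eq a b, d4eq a b]
  simp

/-- polarized left-square relation. -/
lemma pol_lsq (a b : A) :
    lmf K A (a * b) + lmf K A (b * a) = lmf K A a * lmf K A b + lmf K A b * lmf K A a := by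
  have h : lmf K A a * lmf K A a + (lmf K A (a * b) + (lmf K A (b * a) +
      lmf K A b * lmf K A b)) = (lmf K A a + lmf K A b) * (lmf K A a + lmf K A b) := by
    calc lmf K A a * lmf K A a + (lmf K A (a * b) + (lmf K A (b * a) + lmf K A b * lmf K A b))
        = lmf K A (a * a) + (lmf K A (a * b) + (lmf K A (b * a) + lmf K A (b * b))) := by
          rw [rel_lsq a, rel_lsq b]
      _ = lmf K A (a * a + (a * b + (b * a + b * b))) := by simp only [map_add]
      _ = lmf K A ((a + b) * (a + b)) := by rw [mul_add, add_mul, add_mul]; abel_nf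
      _ = lmf K A (a + b) * lmf K A (a + b) := rel_lsq _
      _ = (lmf K A a + lmf K A b) * (lmf K A a + lmf K A b) := by rw [map_add]
  refine eq_of_sub_eq_zero ?_
  have c : lmf K A (a * b) + lmf K A (b * a) -
      (lmf K A a * lmf K A b + lmf K A b * lmf K A a) =
      (lmf K A a * lmf K A a + (lmf K A (a * b) + (lmf K A (b * a) +
        lmf K A b * lmf K A b))) - (lmf K A a + lmf K A b) * (lmf K A a + lmf K A b) := by
    noncomm_ring
  rw [c, h, sub_self]


variable (K A) in
/-- Product of `l`'s over a list of elements of `A`. -/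
def lw (v : List A) : UAlt K A := (v.map fun x => lmf K A x).prod

lemma lw_nil : lw K A ([] : List A) = 1 := rfl

lemma lw_cons (x : A) (v : List A) : lw K A (x :: v) = lmf K A x * lw K A v := by
  simp [lw]

lemma lw_append (u v : List A) : lw K A (u ++ v) = lw K A u * lw K A v := by
  simp [lw]

lemma lw_singleton (x : A) : lw K A [x] = lmf K A x := by simp [lw]

section Main

variable {n : ℕ} (b : Module.Basis (Fin n) K A)

/-- inversion count -/
def invc : List (Fin n) → ℕ
  | [] => 0
  | a :: t => (t.countP fun x => decide (x ≤ a)) + invc t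

lemma invc_le (v : List (Fin n)) : invc v ≤ v.length ^ 2 := by
  induction v with
  | nil => simp [invc]
  | cons a t ih =>
      have h1 : (t.countP fun x => decide (x ≤ a)) ≤ t.length := List.countP_le_length
      have : invc (a :: t) = (t.countP fun x => decide (x ≤ a)) + invc t := rfl
      rw [this]
      have : (a :: t).length = t.length + 1 := rfl
      rw [this]
      nlinarith [ih]

lemma invc_cons (a : Fin n) (t : List (Fin n)) :
    invc (a :: t) = (t.countP fun x => decide (x ≤ a)) + invc t := rfl

lemma invc_append_swap (u t : List (Fin n)) (p q : Fin n) (h : q < p) :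
    invc (u ++ q :: p :: t) + 1 = invc (u ++ p :: q :: t) := by
  induction u with
  | nil =>
      simp [invc_cons, List.countP_cons, not_le.mpr h, h.le]
      omega
  | cons a u ih =>
      simp only [List.cons_append, invc_cons, List.countP_append, List.countP_cons] at *
      omega

lemma sorted_or_bad (v : List (Fin n)) :
    v.Chain' (· < ·) ∨ ∃ u p q t, v = u ++ p :: q :: t ∧ ¬ p < q := by
  induction v with
  | nil => exact Or.inl (List.isChain_nil)
  | cons a v ih =>
      match v, ih with
      | [], _ => exact Or.inl (List.isChain_singleton a)
      | c :: t, ih =>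
          by_cases hac : a < c
          · rcases ih with hs | ⟨u, p, q, t', he, hpq⟩
            · exact Or.inl (List.isChain_cons_cons.mpr ⟨hac, hs⟩)
            · exact Or.inr ⟨a :: u, p, q, t', by rw [List.cons_append, ← he], hpq⟩
          · exact Or.inr ⟨[], a, c, t, rfl, hac⟩

lemma cube_ineq {s t : ℕ} (h : s < t) : s ^ 3 + s ^ 2 < t ^ 3 := by
  calc s ^ 3 + s ^ 2 = s ^ 2 * (s + 1) := by ring
    _ ≤ s ^ 2 * t := Nat.mul_le_mul_left _ h
    _ < t ^ 2 * t := by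
        have hs : s ^ 2 < t ^ 2 := Nat.pow_lt_pow_left h (by norm_num)
        exact mul_lt_mul_of_pos_right hs (by omega)
    _ = t ^ 3 := by ring

end Main


variable (K A) in
/-- "Lower-order" elements: pure `l`-words, and words of the form `l? * r`. -/
def Low : Submodule K (UAlt K A) :=
  Submodule.span K
    ({u | ∃ v : List A, u = lw K A v} ∪
      {u | ∃ (v : List A) (z : A), v.length ≤ 1 ∧ u = lw K A v * rmf K A z})

lemma low_lw (v : List A) : lw K A v ∈ Low K A :=
  Submodule.subset_span (Or.inl ⟨v, rfl⟩)

lemma low_one : (1 : UAlt K A) ∈ Low K A := by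
  simpa [lw_nil] using low_lw (K := K) (A := A) []

lemma low_l (x : A) : lmf K A x ∈ Low K A := by
  simpa [lw_singleton] using low_lw (K := K) (A := A) [x]

lemma low_ll (x y : A) : lmf K A x * lmf K A y ∈ Low K A := by
  have := low_lw (K := K) (A := A) [x, y]
  simpa [lw_cons, lw_singleton, lw_nil, mul_assoc] using this

lemma low_lll (x y z : A) : lmf K A x * lmf K A y * lmf K A z ∈ Low K A := by
  have := low_lw (K := K) (A := A) [x, y, z]
  simpa [lw_cons, lw_singleton, lw_nil, mul_assoc] using this

lemma low_r (z : A) : rmf K A z ∈ Low K A := by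
  refine Submodule.subset_span (Or.inr ⟨[], z, by simp, ?_⟩)
  simp [lw_nil]

lemma low_lr (x z : A) : lmf K A x * rmf K A z ∈ Low K A := by
  refine Submodule.subset_span (Or.inr ⟨[x], z, by simp, ?_⟩)
  simp [lw_singleton]

/-- cyclic rotation of `l x * l y * r z`, modulo lower-order terms. -/
lemma cyc_mem (x y z : A) :
    lmf K A x * lmf K A y * rmf K A z - lmf K A z * lmf K A x * rmf K A y ∈ Low K A := by
  rw [cyc x y z]
  exact sub_mem (add_mem (sub_mem (add_mem (add_mem (sub_mem (sub_mem (add_mem (sub_mem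
    (sub_mem (sub_mem (add_mem (add_mem (low_lr _ _) (low_r _)) (low_l _)) (low_ll _ _))
    (low_r _)) (low_l _)) (low_ll _ _)) (low_lr _ _)) (low_l _)) (low_ll _ _)) (low_ll _ _))
    (low_lll _ _ _)) (low_ll _ _)) (low_lll _ _ _)

/-- the key "kill" lemma : `l x * l y * r y` is lower order. -/
lemma ks_mem (x y : A) : lmf K A x * lmf K A y * rmf K A y ∈ Low K A := by
  have m1 := cyc_mem (K := K) x y y
  have m2 := cyc_mem (K := K) y x y
  rw [show lmf K A y * lmf K A y * rmf K A x = lmf K A (y * y) * rmf K A x by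
    rw [← rel_lsq (K := K) y]] at m2
  have key : lmf K A x * lmf K A y * rmf K A y =
      (lmf K A x * lmf K A y * rmf K A y - lmf K A y * lmf K A x * rmf K A y) +
      ((lmf K A y * lmf K A x * rmf K A y - lmf K A (y * y) * rmf K A x) +
        lmf K A (y * y) * rmf K A x) := by abel
  rw [key]
  exact add_mem m1 (add_mem m2 (low_lr _ _))

/-- swapping the final `l` with the `r`-argument, modulo lower order terms. -/
lemma swap_last_mem (x y z : A) :
    lmf K A x * lmf K A y * rmf K A z + lmf K A x * lmf K A z * rmf K A y ∈ Low K A := by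
  have h := ks_mem (K := K) x (y + z)
  have e : lmf K A x * lmf K A (y + z) * rmf K A (y + z) =
      lmf K A x * lmf K A y * rmf K A y + lmf K A x * lmf K A y * rmf K A z +
      lmf K A x * lmf K A z * rmf K A y + lmf K A x * lmf K A z * rmf K A z := by
    simp only [map_add, mul_add, add_mul]
    abel
  rw [e] at h
  have e2 : lmf K A x * lmf K A y * rmf K A z + lmf K A x * lmf K A z * rmf K A y =
      (lmf K A x * lmf K A y * rmf K A y + lmf K A x * lmf K A y * rmf K A z +
        lmf K A x * lmf K A z * rmf K A y + lmf K A x * lmf K A z * rmf K A z) -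
      lmf K A x * lmf K A y * rmf K A y - lmf K A x * lmf K A z * rmf K A z := by abel
  rw [e2]
  exact sub_mem (sub_mem h (ks_mem x y)) (ks_mem x z)


section Gen

variable {n : ℕ} (b : Module.Basis (Fin n) K A) [DecidableEq (UAlt K A)]

def genL (T : Finset (Fin n)) : UAlt K A := lw K A ((T.sort (· ≤ ·)).map b)

def genM (T : Finset (Fin n)) : UAlt K A :=
  lw K A (((T.sort (· ≤ ·)).dropLast).map b) *
    (match (T.sort (· ≤ ·)).getLast? with
     | some j => rmf K A (b j)
     | none => 0)

def genP (p : Fin n × Fin n) : UAlt K A := lmf K A (b p.1) * rmf K A (b p.2)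

def genSet : Finset (UAlt K A) :=
  ((Finset.univ : Finset (Fin n)).powerset.image (genL b)) ∪
    ((Finset.univ.powerset.filter fun T : Finset (Fin n) => T.Nonempty).image (genM b)) ∪
    (((Finset.univ ×ˢ Finset.univ).filter fun p : Fin n × Fin n => p.2 ≤ p.1).image (genP b))

def W : Submodule K (UAlt K A) := Submodule.span K (genSet b : Set (UAlt K A))

lemma genL_mem_W (T : Finset (Fin n)) : genL b T ∈ W b := by
  refine Submodule.subset_span ?_
  simp only [genSet, Finset.coe_union, Set.mem_union, Finset.mem_coe, Finset.mem_union]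
  exact Or.inl (Or.inl (Finset.mem_image.mpr ⟨T, Finset.mem_powerset.mpr (Finset.subset_univ T), rfl⟩))

lemma genM_mem_W (T : Finset (Fin n)) (hT : T.Nonempty) : genM b T ∈ W b := by
  refine Submodule.subset_span ?_
  simp only [genSet, Finset.coe_union, Set.mem_union, Finset.mem_coe]
  exact Or.inl (Or.inr (Finset.mem_image.mpr ⟨T,
    Finset.mem_filter.mpr ⟨Finset.mem_powerset.mpr (Finset.subset_univ T), hT⟩, rfl⟩))

lemma genP_mem_W (p : Fin n × Fin n) (h : p.2 ≤ p.1) : genP b p ∈ W b := by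
  refine Submodule.subset_span ?_
  simp only [genSet, Finset.coe_union, Set.mem_union, Finset.mem_coe]
  exact Or.inr (Finset.mem_image.mpr ⟨p,
    Finset.mem_filter.mpr ⟨Finset.mem_product.mpr ⟨Finset.mem_univ _, Finset.mem_univ _⟩, h⟩, rfl⟩)

lemma chain'_nodup {v : List (Fin n)} (hv : v.Chain' (· < ·)) : v.Nodup :=
  (List.isChain_iff_pairwise.mp hv).imp ne_of_lt

lemma chain'_sorted {v : List (Fin n)} (hv : v.Chain' (· < ·)) : v.Pairwise (· ≤ ·) :=
  (List.isChain_iff_pairwise.mp hv).imp le_of_lt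

lemma sort_eq_self {v : List (Fin n)} (hv : v.Chain' (· < ·)) :
    v.toFinset.sort (· ≤ ·) = v :=
  (List.toFinset_sort (· ≤ ·) (chain'_nodup hv)).mpr (chain'_sorted hv)

lemma sorted_genL {v : List (Fin n)} (hv : v.Chain' (· < ·)) :
    lw K A (v.map b) = genL b v.toFinset := by
  rw [genL, sort_eq_self hv]

lemma sorted_genM {v : List (Fin n)} {j : Fin n} (hv : (v ++ [j]).Chain' (· < ·)) :
    lw K A (v.map b) * rmf K A (b j) = genM b (v ++ [j]).toFinset := by
  rw [genM, sort_eq_self hv, List.dropLast_concat, List.getLast?_concat]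

lemma ctx_l (c d : UAlt K A) (x : A)
    (H : ∀ k : Fin n, c * (lmf K A (b k) * d) ∈ W b) : c * (lmf K A x * d) ∈ W b := by
  have hx : x ∈ Submodule.span K (Set.range ⇑b) := by rw [b.span_eq]; trivial
  induction hx using Submodule.span_induction with
  | mem y hy =>
      obtain ⟨k, rfl⟩ := hy
      exact H k
  | zero => simp
  | add y z _ _ hy hz =>
      have e : c * (lmf K A (y + z) * d) = c * (lmf K A y * d) + c * (lmf K A z * d) := by
        rw [map_add, add_mul, mul_add]
      rw [e]; exact add_mem hy hz
  | smul a y _ hy =>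
      have e : c * (lmf K A (a • y) * d) = a • (c * (lmf K A y * d)) := by
        rw [map_smul, smul_mul_assoc, mul_smul_comm]
      rw [e]; exact Submodule.smul_mem _ _ hy

lemma ctx_r (c d : UAlt K A) (x : A)
    (H : ∀ k : Fin n, c * (rmf K A (b k) * d) ∈ W b) : c * (rmf K A x * d) ∈ W b := by
  have hx : x ∈ Submodule.span K (Set.range ⇑b) := by rw [b.span_eq]; trivial
  induction hx using Submodule.span_induction with
  | mem y hy =>
      obtain ⟨k, rfl⟩ := hy
      exact H k
  | zero => simp
  | add y z _ _ hy hz =>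
      have e : c * (rmf K A (y + z) * d) = c * (rmf K A y * d) + c * (rmf K A z * d) := by
        rw [map_add, add_mul, mul_add]
      rw [e]; exact add_mem hy hz
  | smul a y _ hy =>
      have e : c * (rmf K A (a • y) * d) = a • (c * (rmf K A y * d)) := by
        rw [map_smul, smul_mul_assoc, mul_smul_comm]
      rw [e]; exact Submodule.smul_mem _ _ hy

end Gen


section Gen2

variable {n : ℕ} (b : Module.Basis (Fin n) K A) [DecidableEq (UAlt K A)]

set_option linter.unusedSectionVars false

theorem sortL : ∀ (N : ℕ) (v : List (Fin n)), v.length ^ 3 + invc v ≤ N →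
    lw K A (v.map b) ∈ W b := by
  intro N
  induction N using Nat.strong_induction_on with
  | _ N IH =>
    intro v hμ
    rcases sorted_or_bad v with hs | ⟨u, p, q, t, rfl, hpq⟩
    · rw [sorted_genL b hs]; exact genL_mem_W b _
    · have hsplit : lw K A ((u ++ p :: q :: t).map b) =
          lw K A (u.map b) * (lmf K A (b p) * (lmf K A (b q) * lw K A (t.map b))) := by
        simp [lw_append, lw_cons, mul_assoc]
      have hlen : (u ++ p :: q :: t).length = u.length + t.length + 2 := by
        simp; omega
      have Hmid : ∀ k : Fin n,
          lw K A (u.map b) * (lmf K A (b k) * lw K A (t.map b)) ∈ W b := by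
        intro k
        have e : lw K A (u.map b) * (lmf K A (b k) * lw K A (t.map b)) =
            lw K A ((u ++ k :: t).map b) := by
          simp [lw_append, lw_cons]
        rw [e]
        refine IH ((u ++ k :: t).length ^ 3 + invc (u ++ k :: t)) ?_ _ le_rfl
        have hl1 : (u ++ k :: t).length < (u ++ p :: q :: t).length := by simp
        calc (u ++ k :: t).length ^ 3 + invc (u ++ k :: t)
            ≤ (u ++ k :: t).length ^ 3 + (u ++ k :: t).length ^ 2 :=
              Nat.add_le_add_left (invc_le _) _
          _ < (u ++ p :: q :: t).length ^ 3 := cube_ineq hl1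
          _ ≤ N := le_trans (Nat.le_add_right _ _) hμ
      rcases (not_lt.mp hpq).lt_or_eq with hlt | heq
      · -- q < p : swap
        have hq : lmf K A (b p) * lmf K A (b q) =
            lmf K A (b p * b q) + lmf K A (b q * b p) - lmf K A (b q) * lmf K A (b p) :=
          eq_sub_iff_add_eq.mpr (pol_lsq (b p) (b q)).symm
        have hsplit2 : lw K A ((u ++ q :: p :: t).map b) =
            lw K A (u.map b) * (lmf K A (b q) * (lmf K A (b p) * lw K A (t.map b))) := by
          simp [lw_append, lw_cons, mul_assoc]
        have e : lw K A ((u ++ p :: q :: t).map b) =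
            lw K A (u.map b) * (lmf K A (b p * b q) * lw K A (t.map b)) +
            lw K A (u.map b) * (lmf K A (b q * b p) * lw K A (t.map b)) -
            lw K A ((u ++ q :: p :: t).map b) := by
          rw [hsplit, hsplit2]
          rw [show lmf K A (b p) * (lmf K A (b q) * lw K A (t.map b)) =
            (lmf K A (b p) * lmf K A (b q)) * lw K A (t.map b) from by rw [mul_assoc], hq]
          noncomm_ring
        rw [e]
        refine sub_mem (add_mem (ctx_l b _ _ _ Hmid) (ctx_l b _ _ _ Hmid)) ?_
        refine IH ((u ++ q :: p :: t).length ^ 3 + invc (u ++ q :: p :: t)) ?_ _ le_rfl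
        have hswap := invc_append_swap u t p q hlt
        have hlen2 : (u ++ q :: p :: t).length = (u ++ p :: q :: t).length := by simp
        have hlen3 : (u ++ q :: p :: t).length ^ 3 = (u ++ p :: q :: t).length ^ 3 := by
          rw [hlen2]
        omega
      · -- p = q : kill
        subst heq
        have e : lw K A ((u ++ q :: q :: t).map b) =
            lw K A (u.map b) * (lmf K A (b q * b q) * lw K A (t.map b)) := by
          rw [hsplit, show lmf K A (b q) * (lmf K A (b q) * lw K A (t.map b)) =
            (lmf K A (b q) * lmf K A (b q)) * lw K A (t.map b) from by rw [mul_assoc],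
            ← rel_lsq (K := K) (b q)]
        rw [e]
        exact ctx_l b _ _ _ Hmid

theorem purel_mix : ∀ (vA : List A) (vB : List (Fin n)),
    lw K A vA * lw K A (vB.map b) ∈ W b := by
  intro vA
  induction vA using List.reverseRecOn with
  | nil =>
      intro vB
      rw [lw_nil, one_mul]
      exact sortL b _ vB le_rfl
  | append_singleton vA'' x ih =>
      intro vB
      have e : lw K A (vA'' ++ [x]) * lw K A (vB.map b) =
          lw K A vA'' * (lmf K A x * lw K A (vB.map b)) := by
        rw [lw_append, lw_singleton, mul_assoc]
      rw [e]
      refine ctx_l b _ _ _ fun k => ?_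
      have e2 : lw K A vA'' * (lmf K A (b k) * lw K A (vB.map b)) =
          lw K A vA'' * lw K A ((k :: vB).map b) := by
        rw [List.map_cons, lw_cons]
      rw [e2]; exact ih (k :: vB)

theorem purel_arb (vA : List A) : lw K A vA ∈ W b := by
  have := purel_mix b vA []
  simpa [lw_nil] using this

theorem shape_mix (LEN : ℕ)
    (H : ∀ (v' : List (Fin n)) (j' : Fin n), v'.length ≤ LEN →
      lw K A (v'.map b) * rmf K A (b j') ∈ W b) :
    ∀ (vA : List A) (vB : List (Fin n)) (j : Fin n), vA.length + vB.length ≤ LEN →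
      lw K A vA * (lw K A (vB.map b) * rmf K A (b j)) ∈ W b := by
  intro vA
  induction vA using List.reverseRecOn with
  | nil =>
      intro vB j hl
      rw [lw_nil, one_mul]
      exact H vB j (by simpa using hl)
  | append_singleton vA'' x ih =>
      intro vB j hl
      have e : lw K A (vA'' ++ [x]) * (lw K A (vB.map b) * rmf K A (b j)) =
          lw K A vA'' * (lmf K A x * (lw K A (vB.map b) * rmf K A (b j))) := by
        rw [lw_append, lw_singleton, mul_assoc]
      rw [e]
      refine ctx_l b _ _ _ fun k => ?_
      have e2 : lw K A vA'' * (lmf K A (b k) * (lw K A (vB.map b) * rmf K A (b j))) =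
          lw K A vA'' * (lw K A ((k :: vB).map b) * rmf K A (b j)) := by
        rw [List.map_cons, lw_cons, mul_assoc]
      rw [e2]
      exact ih (k :: vB) j (by simp at hl ⊢; omega)

theorem shape_arb (LEN : ℕ)
    (H : ∀ (v' : List (Fin n)) (j' : Fin n), v'.length ≤ LEN →
      lw K A (v'.map b) * rmf K A (b j') ∈ W b)
    (vA : List A) (z : A) (hl : vA.length ≤ LEN) :
    lw K A vA * rmf K A z ∈ W b := by
  have e : lw K A vA * rmf K A z = lw K A vA * (rmf K A z * 1) := by rw [mul_one]
  rw [e]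
  refine ctx_r b _ _ _ fun k => ?_
  have e2 : lw K A vA * (rmf K A (b k) * 1) =
      lw K A vA * (lw K A (([] : List (Fin n)).map b) * rmf K A (b k)) := by
    rw [mul_one, List.map_nil, lw_nil, one_mul]
  rw [e2]
  exact shape_mix b LEN H vA [] k (by simpa using hl)

end Gen2


section Gen3

variable {n : ℕ} (b : Module.Basis (Fin n) K A) [DecidableEq (UAlt K A)]

set_option linter.unusedSectionVars false

theorem sortSh : ∀ (N : ℕ) (v : List (Fin n)) (j : Fin n),
    (v ++ [j]).length ^ 3 + invc (v ++ [j]) ≤ N →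
    lw K A (v.map b) * rmf K A (b j) ∈ W b := by
  intro N
  induction N using Nat.strong_induction_on with
  | _ N IH =>
    intro v j hμ
    have Hsub : ∀ (v' : List (Fin n)) (j' : Fin n),
        v'.length + 2 ≤ (v ++ [j]).length → lw K A (v'.map b) * rmf K A (b j') ∈ W b := by
      intro v' j' hlt
      refine IH ((v' ++ [j']).length ^ 3 + invc (v' ++ [j'])) ?_ v' j' le_rfl
      have h1 : (v' ++ [j']).length < (v ++ [j]).length := by
        simp only [List.length_append, List.length_singleton] at hlt ⊢; omega
      calc (v' ++ [j']).length ^ 3 + invc (v' ++ [j'])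
          ≤ (v' ++ [j']).length ^ 3 + (v' ++ [j']).length ^ 2 :=
            Nat.add_le_add_left (invc_le _) _
        _ < (v ++ [j]).length ^ 3 := cube_ineq h1
        _ ≤ N := le_trans (Nat.le_add_right _ _) hμ
    rcases sorted_or_bad (v ++ [j]) with hs | ⟨u, p, q, t, he, hpq⟩
    · rw [sorted_genM b hs]
      exact genM_mem_W b _ ⟨j, by simp⟩
    · rcases List.eq_nil_or_concat' t with rfl | ⟨t'', c, rfl⟩
      · -- bad pair at the junction
        have he2 : v = u ++ [p] ∧ j = q := by
          have h0 : v ++ [j] = (u ++ [p]) ++ [q] := by simpa using he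
          have h2 := List.append_inj' h0 (by simp)
          exact ⟨h2.1, by simpa using h2.2⟩
        obtain ⟨rfl, rfl⟩ := he2
        rcases List.eq_nil_or_concat' u with rfl | ⟨u'', s, rfl⟩
        · -- single pair l_p r_q with q ≤ p : generator
          have e : lw K A (([] ++ [p]).map b) * rmf K A (b j) = genP b (p, j) := by
            simp [lw_singleton, lw_cons, lw_nil, genP]
          rw [e]; exact genP_mem_W b (p, j) (not_lt.mp hpq)
        · -- v = u'' ++ [s, p]
          have HLow : ∀ w ∈ Low K A, lw K A (u''.map b) * w ∈ W b := by
            intro w hw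
            induction hw using Submodule.span_induction with
            | mem y hy =>
                rcases hy with ⟨vA, rfl⟩ | ⟨vA, z, hvA, rfl⟩
                · rw [← lw_append]; exact purel_arb b _
                · have e : lw K A (u''.map b) * (lw K A vA * rmf K A z) =
                      lw K A (u''.map b ++ vA) * rmf K A z := by
                    rw [lw_append, mul_assoc]
                  rw [e]
                  refine shape_arb b (u''.length + 1) (fun v' j' h' => Hsub v' j' ?_) _ z ?_
                  · simp only [List.length_append, List.length_singleton, List.length_cons]
                    omega
                  · simp only [List.length_append, List.length_map]
                    omega
            | zero => simp
            | add y z hy hz ihy ihz => rw [mul_add]; exact add_mem ihy ihz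
            | smul a y hy ihy => rw [mul_smul_comm]; exact Submodule.smul_mem _ _ ihy
          rcases (not_lt.mp hpq).lt_or_eq with hlt | heq
          · -- q < p : swap the last pair
            have hmem := HLow _ (swap_last_mem (b s) (b p) (b j))
            have e : lw K A ((u'' ++ [s] ++ [p]).map b) * rmf K A (b j) =
                lw K A (u''.map b) *
                  (lmf K A (b s) * lmf K A (b p) * rmf K A (b j) +
                    lmf K A (b s) * lmf K A (b j) * rmf K A (b p)) -
                lw K A ((u'' ++ [s, j]).map b) * rmf K A (b p) := by
              simp only [List.map_append, List.map_cons, List.map_nil, lw_append, lw_cons,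
                lw_nil]
              noncomm_ring
            rw [e]
            refine sub_mem hmem ?_
            refine IH (((u'' ++ [s, j]) ++ [p]).length ^ 3 + invc ((u'' ++ [s, j]) ++ [p]))
              ?_ _ _ le_rfl
            have hswap := invc_append_swap (u'' ++ [s]) [] p j hlt
            have e1 : (u'' ++ [s, j]) ++ [p] = (u'' ++ [s]) ++ j :: p :: [] := by simp
            have e2 : u'' ++ [s] ++ [p] ++ [j] = (u'' ++ [s]) ++ p :: j :: [] := by simp
            rw [e1]
            rw [e2] at hμ
            have e3 : ((u'' ++ [s]) ++ j :: p :: []).length ^ 3 =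
                ((u'' ++ [s]) ++ p :: j :: []).length ^ 3 := by simp
            omega
          · -- p = q : kill the last pair
            subst heq
            have hmem := HLow _ (ks_mem (b s) (b j))
            have e : lw K A ((u'' ++ [s] ++ [j]).map b) * rmf K A (b j) =
                lw K A (u''.map b) * (lmf K A (b s) * lmf K A (b j) * rmf K A (b j)) := by
              simp only [List.map_append, List.map_cons, List.map_nil, lw_append, lw_cons,
                lw_nil]
              noncomm_ring
            rw [e]; exact hmem
      · -- bad pair inside v
        have he2 : v = u ++ p :: q :: t'' ∧ j = c := by
          have h0 : v ++ [j] = (u ++ p :: q :: t'') ++ [c] := by simpa using he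
          have h2 := List.append_inj' h0 (by simp)
          exact ⟨h2.1, by simpa using h2.2⟩
        obtain ⟨rfl, rfl⟩ := he2
        have Hmid : ∀ k : Fin n, lw K A (u.map b) *
            (lmf K A (b k) * (lw K A (t''.map b) * rmf K A (b j))) ∈ W b := by
          intro k
          have e : lw K A (u.map b) * (lmf K A (b k) * (lw K A (t''.map b) * rmf K A (b j))) =
              lw K A ((u ++ k :: t'').map b) * rmf K A (b j) := by
            simp only [List.map_append, List.map_cons, lw_append, lw_cons]
            noncomm_ring
          rw [e]
          refine Hsub (u ++ k :: t'') j ?_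
          simp only [List.length_append, List.length_cons, List.length_singleton]
          omega
        rcases (not_lt.mp hpq).lt_or_eq with hlt | heq
        · -- q < p : swap
          have hq : lmf K A (b p) * lmf K A (b q) =
              lmf K A (b p * b q) + lmf K A (b q * b p) - lmf K A (b q) * lmf K A (b p) :=
            eq_sub_iff_add_eq.mpr (pol_lsq (b p) (b q)).symm
          have e : lw K A ((u ++ p :: q :: t'').map b) * rmf K A (b j) =
              lw K A (u.map b) * (lmf K A (b p * b q) * (lw K A (t''.map b) * rmf K A (b j))) +
              lw K A (u.map b) * (lmf K A (b q * b p) * (lw K A (t''.map b) * rmf K A (b j))) -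
              lw K A ((u ++ q :: p :: t'').map b) * rmf K A (b j) := by
            simp only [List.map_append, List.map_cons, lw_append, lw_cons]
            rw [show lmf K A (b p) * (lmf K A (b q) * lw K A (t''.map b)) =
              (lmf K A (b p) * lmf K A (b q)) * lw K A (t''.map b) from by rw [mul_assoc], hq]
            noncomm_ring
          rw [e]
          refine sub_mem (add_mem (ctx_l b _ _ _ Hmid) (ctx_l b _ _ _ Hmid)) ?_
          refine IH (((u ++ q :: p :: t'') ++ [j]).length ^ 3 +
            invc ((u ++ q :: p :: t'') ++ [j])) ?_ _ _ le_rfl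
          have hswap := invc_append_swap u (t'' ++ [j]) p q hlt
          have e1 : (u ++ q :: p :: t'') ++ [j] = u ++ q :: p :: (t'' ++ [j]) := by simp
          have e2 : (u ++ p :: q :: t'') ++ [j] = u ++ p :: q :: (t'' ++ [j]) := by simp
          rw [e1]
          rw [e2] at hμ
          have e3 : (u ++ q :: p :: (t'' ++ [j])).length ^ 3 =
              (u ++ p :: q :: (t'' ++ [j])).length ^ 3 := by simp
          omega
        · -- p = q : kill
          subst heq
          have e : lw K A ((u ++ q :: q :: t'').map b) * rmf K A (b j) =
              lw K A (u.map b) * (lmf K A (b q * b q) * (lw K A (t''.map b) * rmf K A (b j))) := by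
            simp only [List.map_append, List.map_cons, lw_append, lw_cons]
            rw [show lmf K A (b q) * (lmf K A (b q) * lw K A (t''.map b)) =
              (lmf K A (b q) * lmf K A (b q)) * lw K A (t''.map b) from by rw [mul_assoc],
              ← rel_lsq (K := K) (b q)]
            noncomm_ring
          rw [e]
          exact ctx_l b _ _ _ Hmid

end Gen3


section Gen4

variable {n : ℕ} (b : Module.Basis (Fin n) K A) [DecidableEq (UAlt K A)]

set_option linter.unusedSectionVars false

lemma shapeG (vA : List A) (z : A) : lw K A vA * rmf K A z ∈ W b :=
  shape_arb b vA.length (fun v' j' _ => sortSh b _ v' j' le_rfl) vA z le_rfl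

lemma one_mem_W : (1 : UAlt K A) ∈ W b := by
  have := genL_mem_W b ∅
  simpa [genL, lw] using this

lemma l_mem_W (x : A) : lmf K A x ∈ W b := by
  have := purel_arb b (K := K) [x]
  simpa [lw_singleton] using this

lemma r_mem_W (z : A) : rmf K A z ∈ W b := by
  have := shapeG b [] z
  simpa [lw_nil] using this

lemma mul_l_mem (x : A) {u : UAlt K A} (hu : u ∈ W b) : lmf K A x * u ∈ W b := by
  induction hu using Submodule.span_induction with
  | mem y hy =>
      rw [Finset.mem_coe, genSet, Finset.mem_union, Finset.mem_union] at hy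
      rcases hy with (hy | hy) | hy
      · obtain ⟨T, _, rfl⟩ := Finset.mem_image.mp hy
        rw [genL, ← lw_cons]
        exact purel_arb b _
      · obtain ⟨T, hT, rfl⟩ := Finset.mem_image.mp hy
        have hTne : T.Nonempty := (Finset.mem_filter.mp hT).2
        obtain ⟨v', jj, hv'⟩ : ∃ v' jj, T.sort (· ≤ ·) = v' ++ [jj] := by
          rcases List.eq_nil_or_concat' (T.sort (· ≤ ·)) with h | ⟨v', jj, h⟩
          · exfalso
            obtain ⟨a, ha⟩ := hTne
            have := Finset.mem_sort (α := Fin n) (· ≤ ·) |>.mpr ha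
            rw [h] at this; simp at this
          · exact ⟨v', jj, h⟩
        rw [genM, hv', List.dropLast_concat, List.getLast?_concat]
        have e : lmf K A x * (lw K A (v'.map b) * rmf K A (b jj)) =
            lw K A (x :: v'.map b) * rmf K A (b jj) := by
          rw [lw_cons, mul_assoc]
        rw [e]
        exact shapeG b _ _
      · obtain ⟨p, _, rfl⟩ := Finset.mem_image.mp hy
        have e : lmf K A x * genP b p =
            lw K A [x, b p.1] * rmf K A (b p.2) := by
          rw [genP]
          simp [lw_cons, lw_singleton, lw_nil, mul_assoc]
        rw [e]
        exact shapeG b _ _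
  | zero => simp
  | add y z hy hz ihy ihz => rw [mul_add]; exact add_mem ihy ihz
  | smul a y hy ihy => rw [mul_smul_comm]; exact Submodule.smul_mem _ _ ihy

lemma r_mul_lw (z : A) (vA : List A) : rmf K A z * lw K A vA ∈ W b := by
  induction vA with
  | nil =>
      rw [lw_nil, mul_one]
      exact r_mem_W b z
  | cons x t ih =>
      have e : rmf K A z * lw K A (x :: t) =
          lmf K A x * (rmf K A z * lw K A t) + lmf K A (x * z) * lw K A t -
            lmf K A z * (lmf K A x * lw K A t) := by
        rw [lw_cons, show rmf K A z * (lmf K A x * lw K A t) =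
          (rmf K A z * lmf K A x) * lw K A t from (mul_assoc _ _ _).symm, rl_eq x z]
        noncomm_ring
      rw [e]
      refine sub_mem (add_mem (mul_l_mem b x ih) ?_) ?_
      · rw [← lw_cons]; exact purel_arb b _
      · rw [← lw_cons, ← lw_cons]; exact purel_arb b _

lemma r_mul_shape (z zz : A) (vA : List A) :
    rmf K A z * (lw K A vA * rmf K A zz) ∈ W b := by
  induction vA with
  | nil =>
      have e : rmf K A z * (lw K A [] * rmf K A zz) =
          lw K A [] * rmf K A (z * zz) + lw K A [z * zz] - lw K A [zz, z] := by
        rw [lw_nil, one_mul, one_mul, rr_eq z zz]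
        simp [lw_cons, lw_singleton, lw_nil]
      rw [e]
      exact sub_mem (add_mem (shapeG b _ _) (purel_arb b _)) (purel_arb b _)
  | cons x t ih =>
      have e : rmf K A z * (lw K A (x :: t) * rmf K A zz) =
          lmf K A x * (rmf K A z * (lw K A t * rmf K A zz)) +
            lmf K A (x * z) * (lw K A t * rmf K A zz) -
            lmf K A z * (lmf K A x * (lw K A t * rmf K A zz)) := by
        rw [lw_cons, show rmf K A z * (lmf K A x * lw K A t * rmf K A zz) =
          (rmf K A z * lmf K A x) * (lw K A t * rmf K A zz) from by noncomm_ring, rl_eq x z]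
        noncomm_ring
      rw [e]
      refine sub_mem (add_mem (mul_l_mem b x ih) ?_) ?_
      · have e2 : lmf K A (x * z) * (lw K A t * rmf K A zz) =
            lw K A ((x * z) :: t) * rmf K A zz := by rw [lw_cons, mul_assoc]
        rw [e2]; exact shapeG b _ _
      · have e2 : lmf K A z * (lmf K A x * (lw K A t * rmf K A zz)) =
            lw K A (z :: x :: t) * rmf K A zz := by rw [lw_cons, lw_cons]; noncomm_ring
        rw [e2]; exact shapeG b _ _

lemma mul_r_mem (z : A) {u : UAlt K A} (hu : u ∈ W b) : rmf K A z * u ∈ W b := by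
  induction hu using Submodule.span_induction with
  | mem y hy =>
      rw [Finset.mem_coe, genSet, Finset.mem_union, Finset.mem_union] at hy
      rcases hy with (hy | hy) | hy
      · obtain ⟨T, _, rfl⟩ := Finset.mem_image.mp hy
        exact r_mul_lw b z _
      · obtain ⟨T, hT, rfl⟩ := Finset.mem_image.mp hy
        have hTne : T.Nonempty := (Finset.mem_filter.mp hT).2
        obtain ⟨v', jj, hv'⟩ : ∃ v' jj, T.sort (· ≤ ·) = v' ++ [jj] := by
          rcases List.eq_nil_or_concat' (T.sort (· ≤ ·)) with h | ⟨v', jj, h⟩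
          · exfalso
            obtain ⟨a, ha⟩ := hTne
            have := Finset.mem_sort (α := Fin n) (· ≤ ·) |>.mpr ha
            rw [h] at this; simp at this
          · exact ⟨v', jj, h⟩
        rw [genM, hv', List.dropLast_concat, List.getLast?_concat]
        exact r_mul_shape b z _ _
      · obtain ⟨p, _, rfl⟩ := Finset.mem_image.mp hy
        have e : genP b p = lw K A [b p.1] * rmf K A (b p.2) := by
          rw [genP, lw_singleton]
        rw [e]
        exact r_mul_shape b z _ _
  | zero => simp
  | add y z' hy hz ihy ihz => rw [mul_add]; exact add_mem ihy ihz
  | smul a y hy ihy => rw [mul_smul_comm]; exact Submodule.smul_mem _ _ ihy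

lemma lw_mul_mem (vA : List A) {u : UAlt K A} (hu : u ∈ W b) : lw K A vA * u ∈ W b := by
  induction vA with
  | nil => rw [lw_nil, one_mul]; exact hu
  | cons x t ih => rw [lw_cons, mul_assoc]; exact mul_l_mem b x ih

lemma mul_mem_W {u v : UAlt K A} (hu : u ∈ W b) (hv : v ∈ W b) : u * v ∈ W b := by
  induction hu using Submodule.span_induction with
  | mem y hy =>
      rw [Finset.mem_coe, genSet, Finset.mem_union, Finset.mem_union] at hy
      rcases hy with (hy | hy) | hy
      · obtain ⟨T, _, rfl⟩ := Finset.mem_image.mp hy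
        exact lw_mul_mem b _ hv
      · obtain ⟨T, hT, rfl⟩ := Finset.mem_image.mp hy
        have hTne : T.Nonempty := (Finset.mem_filter.mp hT).2
        obtain ⟨v', jj, hv'⟩ : ∃ v' jj, T.sort (· ≤ ·) = v' ++ [jj] := by
          rcases List.eq_nil_or_concat' (T.sort (· ≤ ·)) with h | ⟨v', jj, h⟩
          · exfalso
            obtain ⟨a, ha⟩ := hTne
            have := Finset.mem_sort (α := Fin n) (· ≤ ·) |>.mpr ha
            rw [h] at this; simp at this
          · exact ⟨v', jj, h⟩
        rw [genM, hv', List.dropLast_concat, List.getLast?_concat, mul_assoc]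
        exact lw_mul_mem b _ (mul_r_mem b _ hv)
      · obtain ⟨p, _, rfl⟩ := Finset.mem_image.mp hy
        rw [genP, mul_assoc]
        have := mul_r_mem b (b p.2) hv
        have e : lmf K A (b p.1) * (rmf K A (b p.2) * v) ∈ W b := mul_l_mem b _ this
        exact e
  | zero => rw [zero_mul]; exact Submodule.zero_mem _
  | add y z' hy hz ihy ihz => rw [add_mul]; exact add_mem ihy ihz
  | smul a y hy ihy => rw [smul_mul_assoc]; exact Submodule.smul_mem _ _ ihy

end Gen4


section Gen5

variable {n : ℕ} (b : Module.Basis (Fin n) K A) [DecidableEq (UAlt K A)]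

set_option linter.unusedSectionVars false

theorem W_eq_top : W b = ⊤ := by
  rw [eq_top_iff]
  intro u hu
  obtain ⟨t, rfl⟩ := RingQuot.mkAlgHom_surjective K (AltRel K A) u
  clear hu
  induction t using TensorAlgebra.induction with
  | algebraMap r =>
      rw [AlgHom.commutes, Algebra.algebraMap_eq_smul_one]
      exact Submodule.smul_mem _ r (one_mem_W b)
  | ι x =>
      have hx : (TensorAlgebra.ι K x : TensorAlgebra K (A × A)) =
          TensorAlgebra.ι K ((x.1, 0) : A × A) + TensorAlgebra.ι K ((0, x.2) : A × A) := by
        rw [← map_add]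
        congr 1
        simp [Prod.ext_iff]
      rw [hx, map_add]
      have h1 : RingQuot.mkAlgHom K (AltRel K A) (TensorAlgebra.ι K ((x.1, 0) : A × A)) =
          lmf K A x.1 := rfl
      have h2 : RingQuot.mkAlgHom K (AltRel K A) (TensorAlgebra.ι K ((0, x.2) : A × A)) =
          rmf K A x.2 := rfl
      rw [h1, h2]
      exact add_mem (l_mem_W b x.1) (r_mem_W b x.2)
  | mul a c ha hc =>
      rw [map_mul]
      exact mul_mem_W b ha hc
  | add a c ha hc =>
      rw [map_add]
      exact add_mem ha hc

lemma pairs_card :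
    (((Finset.univ ×ˢ Finset.univ).filter fun p : Fin n × Fin n => p.2 ≤ p.1)).card =
      ∑ i : Fin n, ((i : ℕ) + 1) := by
  have he : ((Finset.univ ×ˢ Finset.univ).filter fun p : Fin n × Fin n => p.2 ≤ p.1) =
      Finset.univ.biUnion (fun i : Fin n => (Finset.Iic i).image fun j => (i, j)) := by
    ext ⟨i, j⟩
    simp only [Finset.mem_filter, Finset.mem_product, Finset.mem_univ, true_and,
      Finset.mem_biUnion, Finset.mem_image, Finset.mem_Iic, Prod.mk.injEq]
    constructor
    · intro h; exact ⟨i, j, h, rfl, rfl⟩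
    · rintro ⟨k, j2, hj2, rfl, rfl⟩; exact hj2
  rw [he, Finset.card_biUnion]
  · refine Finset.sum_congr rfl fun i _ => ?_
    rw [Finset.card_image_of_injective _ (fun a c h => by simpa using h), Fin.card_Iic]
  · intro i _ k _ hik
    simp only [Finset.disjoint_left, Finset.mem_image]
    rintro a ⟨j, _, rfl⟩ ⟨j', _, h⟩
    exact hik (by simpa using congrArg Prod.fst h.symm)

lemma genSet_card : (genSet b).card * 2 ≤ (2 ^ n + (2 ^ n - 1)) * 2 + n * (n + 1) := by
  have h1 : (genSet b).card ≤ 2 ^ n + (2 ^ n - 1) + ∑ i : Fin n, ((i : ℕ) + 1) := by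
    refine le_trans (Finset.card_union_le _ _) ?_
    have h2 : ((Finset.univ.powerset.image (genL b) : Finset (UAlt K A)) ∪
        (Finset.univ.powerset.filter fun T : Finset (Fin n) => T.Nonempty).image
          (genM b)).card ≤ 2 ^ n + (2 ^ n - 1) := by
      refine le_trans (Finset.card_union_le _ _) (Nat.add_le_add ?_ ?_)
      · refine le_trans (Finset.card_image_le) ?_
        rw [Finset.card_powerset]
        simp
      · refine le_trans (Finset.card_image_le) ?_
        have he : (Finset.univ.powerset.filter fun T : Finset (Fin n) => T.Nonempty) =
            Finset.univ.powerset.erase ∅ := by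
          ext T
          simp [Finset.nonempty_iff_ne_empty, and_comm]
        rw [he, Finset.card_erase_of_mem (Finset.mem_powerset.mpr (Finset.empty_subset _)),
          Finset.card_powerset]
        simp
    refine Nat.add_le_add h2 ?_
    refine le_trans (Finset.card_image_le) ?_
    rw [pairs_card]
  have h3 : (∑ i : Fin n, ((i : ℕ) + 1)) * 2 = n * (n + 1) := by
    rw [Fin.sum_univ_eq_sum_range (fun k => k + 1) n]
    have h4 : (∑ k ∈ Finset.range n, (k + 1)) = ∑ i ∈ Finset.range (n + 1), i := by
      rw [Finset.sum_range_succ' _ n]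
      simp
    rw [h4, Finset.sum_range_id_mul_two (n + 1)]
    simp [Nat.add_sub_cancel]
    ring
  omega

end Gen5

end UAltProof

/-- If `A` is an alternative `K`-algebra that is free of rank `n` as a `K`-module, then
`U_Alt(A)` admits a set of `K`-module generators with at most
`2·2^n + (n² + n − 2)/2` elements. -/
theorem uAlt_generators_card_le (K A : Type) [CommRing K] [NonUnitalNonAssocRing A]
    [Module K A] [SMulCommClass K A A] [IsScalarTower K A A]
    (alt_left : ∀ x y : A, x * x * y = x * (x * y))
    (alt_right : ∀ x y : A, x * y * y = x * (y * y))
    (n : ℕ) (b : Module.Basis (Fin n) K A) :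
    ∃ S : Finset (UAlt K A),
      (S.card : ℤ) ≤ 2 * 2 ^ n + ((n : ℤ) ^ 2 + n - 2) / 2 ∧
      Submodule.span K (S : Set (UAlt K A)) = ⊤ := by
  classical
  refine ⟨UAltProof.genSet b, ?_, UAltProof.W_eq_top b⟩
  have h := UAltProof.genSet_card b
  have hp : (1 : ℕ) ≤ 2 ^ n := Nat.one_le_two_pow
  zify [hp] at h
  have h2 : (2 : ℤ) ∣ ((n : ℤ) ^ 2 + (n : ℤ) - 2) := by
    have he : ((n : ℤ) ^ 2 + (n : ℤ) - 2) = (n : ℤ) * ((n : ℤ) + 1) - 2 := by ring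
    rw [he]
    exact dvd_sub (Int.even_mul_succ_self (n : ℤ)).two_dvd (by norm_num)
  obtain ⟨M, hM⟩ := h2
  have hMe : ((n : ℤ) ^ 2 + (n : ℤ) - 2) / 2 = M := by
    rw [hM]; exact Int.mul_ediv_cancel_left _ (by norm_num)
  rw [hMe]
  nlinarith [h, hM]

end
end

section
/- Let K be a field and let A = K[X]/(X² + 1), regarded as a (nonunital) associative K-algebra. Then the homomorphism of unital K-algebras U_Alt(A) → (A₊)ᵒᵖ ⊗_K A₊ carrying the class of l_a to aᵒᵖ ⊗ 1 and the class of r_b to 1 ⊗ b is an isomorphism; in particular dim_K U_Alt(A) = 9. -/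
noncomputable section

open scoped TensorProduct

open Polynomial

namespace UAltProofAux

set_option maxHeartbeats 1000000
set_option synthInstance.maxHeartbeats 400000

open MulOpposite

variable (K : Type) [Field K]

abbrev Aq : Type := AdjoinRoot (X ^ 2 + 1 : K[X])

/-- The image of `X`. -/
def tq : Aq K := AdjoinRoot.root _

lemma hfmonic : (X ^ 2 + 1 : K[X]).Monic := by
  have := monic_X_pow_add_C (1 : K) (n := 2) two_ne_zero
  rwa [map_one] at this

lemma hfne : (X ^ 2 + 1 : K[X]) ≠ 0 := (hfmonic K).ne_zero

lemma tq_mul_tq : tq K * tq K = -1 := by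
  have h : AdjoinRoot.mk (X ^ 2 + 1 : K[X]) (X ^ 2 + 1 : K[X]) = 0 :=
    AdjoinRoot.mk_self
  rw [map_add, map_pow, AdjoinRoot.mk_X, map_one] at h
  have h2 : tq K ^ 2 = -1 := eq_neg_of_add_eq_zero_left h
  rw [← sq]; exact h2

/-- The power basis of `Aq`. -/
def pb : PowerBasis K (Aq K) := AdjoinRoot.powerBasis (hfne K)

lemma pb_dim : (pb K).dim = 2 := by
  have h : (X ^ 2 + 1 : K[X]) = X ^ 2 + C 1 := by rw [map_one]
  rw [pb, AdjoinRoot.powerBasis_dim, h, natDegree_X_pow_add_C]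

lemma span_one_t (z : Aq K) : z ∈ Submodule.span K ({1, tq K} : Set (Aq K)) := by
  have h1 : Set.range ⇑(pb K).basis ⊆ ({1, tq K} : Set (Aq K)) := by
    rintro _ ⟨i, rfl⟩
    have hi : (i : ℕ) < 2 := by have h1 := i.isLt; have h2 := pb_dim K; omega
    rw [(pb K).basis_eq_pow]
    have hgen : (pb K).gen = tq K := rfl
    have h2 : (i : ℕ) = 0 ∨ (i : ℕ) = 1 := by omega
    rcases h2 with h2 | h2 <;> rw [h2, hgen] <;> simp [tq]
  have h2 : z ∈ Submodule.span K (Set.range ⇑(pb K).basis) := by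
    rw [(pb K).basis.span_eq]; trivial
  exact Submodule.span_mono h1 h2

/-- `l` as a linear map into `U_Alt`. -/
def lL : Aq K →ₗ[K] UAlt K (Aq K) :=
  (RingQuot.mkAlgHom K (AltRel K (Aq K))).toLinearMap ∘ₗ
    (TensorAlgebra.ι K).comp (LinearMap.inl K (Aq K) (Aq K))

/-- `r` as a linear map into `U_Alt`. -/
def rL : Aq K →ₗ[K] UAlt K (Aq K) :=
  (RingQuot.mkAlgHom K (AltRel K (Aq K))).toLinearMap ∘ₗ
    (TensorAlgebra.ι K).comp (LinearMap.inr K (Aq K) (Aq K))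

lemma lL_apply (a : Aq K) : lL K a = lUAlt K (Aq K) a := rfl

lemma rL_apply (a : Aq K) : rL K a = rUAlt K (Aq K) a := rfl

lemma lU_add (a b : Aq K) :
    lUAlt K (Aq K) (a + b) = lUAlt K (Aq K) a + lUAlt K (Aq K) b := by
  rw [← lL_apply, ← lL_apply, ← lL_apply, map_add]

lemma lU_neg (a : Aq K) : lUAlt K (Aq K) (-a) = -lUAlt K (Aq K) a := by
  rw [← lL_apply, ← lL_apply, map_neg]

lemma lU_smul (c : K) (a : Aq K) :
    lUAlt K (Aq K) (c • a) = c • lUAlt K (Aq K) a := by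
  rw [← lL_apply, ← lL_apply, map_smul]

lemma lU_zero : lUAlt K (Aq K) 0 = 0 := by
  rw [← lL_apply, map_zero]

lemma rU_add (a b : Aq K) :
    rUAlt K (Aq K) (a + b) = rUAlt K (Aq K) a + rUAlt K (Aq K) b := by
  rw [← rL_apply, ← rL_apply, ← rL_apply, map_add]

lemma rU_neg (a : Aq K) : rUAlt K (Aq K) (-a) = -rUAlt K (Aq K) a := by
  rw [← rL_apply, ← rL_apply, map_neg]

lemma rU_smul (c : K) (a : Aq K) :
    rUAlt K (Aq K) (c • a) = c • rUAlt K (Aq K) a := by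
  rw [← rL_apply, ← rL_apply, map_smul]

lemma rU_zero : rUAlt K (Aq K) 0 = 0 := by
  rw [← rL_apply, map_zero]

lemma Ulsq (a : Aq K) :
    lUAlt K (Aq K) (a * a) = lUAlt K (Aq K) a * lUAlt K (Aq K) a := by
  have h := RingQuot.mkAlgHom_rel K (AltRel.lsq (R := K) (A := Aq K) a)
  rw [map_mul] at h
  exact h

lemma Ursq (a : Aq K) :
    rUAlt K (Aq K) (a * a) = rUAlt K (Aq K) a * rUAlt K (Aq K) a := by
  have h := RingQuot.mkAlgHom_rel K (AltRel.rsq (R := K) (A := Aq K) a)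
  rw [map_mul] at h
  exact h

lemma Ulmid (a b : Aq K) :
    lUAlt K (Aq K) (a * b) - lUAlt K (Aq K) b * lUAlt K (Aq K) a =
      rUAlt K (Aq K) b * lUAlt K (Aq K) a - lUAlt K (Aq K) a * rUAlt K (Aq K) b := by
  have h := RingQuot.mkAlgHom_rel K (AltRel.lmid (R := K) (A := Aq K) a b)
  rw [map_sub, map_sub, map_mul, map_mul, map_mul] at h
  exact h

lemma Urmid (a b : Aq K) :
    rUAlt K (Aq K) b * lUAlt K (Aq K) a - lUAlt K (Aq K) a * rUAlt K (Aq K) b =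
      rUAlt K (Aq K) a * rUAlt K (Aq K) b - rUAlt K (Aq K) (a * b) := by
  have h := RingQuot.mkAlgHom_rel K (AltRel.rmid (R := K) (A := Aq K) a b)
  rw [map_sub, map_sub, map_mul, map_mul, map_mul] at h
  exact h

section basisComm

-- Abbreviations for the four basic generators.
local notation "e" => lUAlt K (Aq K) 1
local notation "x" => lUAlt K (Aq K) (tq K)
local notation "f" => rUAlt K (Aq K) 1
local notation "y" => rUAlt K (Aq K) (tq K)

lemma he : e * e = e := by simpa using (Ulsq K 1).symm

lemma hx2 : x * x = -e := by
  have h := Ulsq K (tq K)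
  rw [tq_mul_tq, lU_neg] at h
  exact h.symm

lemma hpol : e * x + x * e = x + x := by
  have hsq : (1 + tq K) * (1 + tq K) = tq K + tq K := by
    have h := tq_mul_tq K
    linear_combination h
  have h := Ulsq K (1 + tq K)
  rw [hsq, lU_add, lU_add] at h
  -- h : x + x = (e + x) * (e + x)
  have hcalc : e * x + x * e = (e + x) * (e + x) - e * e - x * x := by noncomm_ring
  rw [hcalc, ← h, he, hx2]
  abel

lemma hu : e * x - x = x - x * e := by
  rw [sub_eq_sub_iff_add_eq_add]
  exact hpol K

lemma h8 : x - x * e = y * e - e * y := by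
  have h := Ulmid K 1 (tq K)
  rw [one_mul] at h
  exact h

lemma hye : y * e = e * y := by
  have hD1 : e * x - x = y * e - e * y := (hu K).trans (h8 K)
  have heD : e * (y * e - e * y) = 0 := by
    rw [← hD1, mul_sub, ← mul_assoc, he, sub_self]
  have hDe : (y * e - e * y) * e = 0 := by
    rw [← h8, sub_mul, mul_assoc, he, sub_self]
  have h4 : e * (y * e) = e * y := by
    rw [mul_sub, sub_eq_zero] at heD
    rw [heD, ← mul_assoc, he]
  have h5 : y * e = (e * y) * e := by
    rw [sub_mul, sub_eq_zero] at hDe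
    calc y * e = y * (e * e) := by rw [he]
      _ = (y * e) * e := by rw [mul_assoc]
      _ = (e * y) * e := hDe
  calc y * e = (e * y) * e := h5
    _ = e * (y * e) := by rw [mul_assoc]
    _ = e * y := h4

lemma hxe : x * e = x := by
  have h := h8 K
  rw [hye K, sub_self] at h
  exact (sub_eq_zero.mp h).symm

lemma hex : e * x = x := by
  have h := hu K
  rw [hxe K, sub_self] at h
  exact sub_eq_zero.mp h

lemma c11 : f * e = e * f := by
  have h := Ulmid K 1 1
  rw [one_mul, he K, sub_self] at h
  exact sub_eq_zero.mp h.symm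

lemma c1t : y * e = e * y := hye K

lemma ct1 : f * x = x * f := by
  have h := Ulmid K (tq K) 1
  rw [mul_one, hex K, sub_self] at h
  exact sub_eq_zero.mp h.symm

lemma ctt : y * x = x * y := by
  have h := Ulmid K (tq K) (tq K)
  rw [tq_mul_tq, lU_neg, hx2 K, sub_self] at h
  exact sub_eq_zero.mp h.symm

end basisComm

lemma comm_all (a b : Aq K) :
    rUAlt K (Aq K) b * lUAlt K (Aq K) a = lUAlt K (Aq K) a * rUAlt K (Aq K) b := by
  suffices H : ∀ a' ∈ Submodule.span K ({1, tq K} : Set (Aq K)),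
      ∀ b' ∈ Submodule.span K ({1, tq K} : Set (Aq K)),
      rUAlt K (Aq K) b' * lUAlt K (Aq K) a' = lUAlt K (Aq K) a' * rUAlt K (Aq K) b' by
    exact H a (span_one_t K a) b (span_one_t K b)
  intro a' ha'
  refine Submodule.span_induction ?_ ?_ ?_ ?_ ha'
  · intro u hu b' hb'
    refine Submodule.span_induction ?_ ?_ ?_ ?_ hb'
    · intro v hv
      rcases hu with rfl | rfl <;> rcases hv with rfl | rfl
      · exact c11 K
      · exact c1t K
      · exact ct1 K
      · exact ctt K
    · rw [rU_zero, zero_mul, mul_zero]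
    · intro v w _ _ hv hw
      rw [rU_add, add_mul, mul_add, hv, hw]
    · intro c v _ hv
      rw [rU_smul, smul_mul_assoc, hv, mul_smul_comm]
  · intro b' _
    rw [lU_zero, zero_mul, mul_zero]
  · intro u v _ _ hu hv b' hb'
    rw [lU_add, add_mul, mul_add, hu b' hb', hv b' hb']
  · intro c u _ hu b' hb'
    rw [lU_smul, smul_mul_assoc, mul_smul_comm, hu b' hb']

lemma lU_mul (a b : Aq K) :
    lUAlt K (Aq K) (a * b) = lUAlt K (Aq K) b * lUAlt K (Aq K) a := by
  have h := Ulmid K a b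
  rw [comm_all, sub_self, sub_eq_zero] at h
  exact h

lemma rU_mul (a b : Aq K) :
    rUAlt K (Aq K) (a * b) = rUAlt K (Aq K) a * rUAlt K (Aq K) b := by
  have h := Urmid K a b
  rw [comm_all, sub_self] at h
  exact (sub_eq_zero.mp h.symm).symm

instance : IsScalarTower K (Unitization K (Aq K)) (Unitization K (Aq K)) :=
  ⟨fun r u v => by
    ext
    · simp [Unitization.fst_mul, mul_assoc]
    · simp [Unitization.snd_mul, smul_add, smul_smul, smul_comm, smul_mul_assoc,
        mul_comm, add_comm]⟩

instance : SMulCommClass K (Unitization K (Aq K)) (Unitization K (Aq K)) :=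
  ⟨fun r u v => by
    ext
    · simp [Unitization.fst_mul, mul_assoc, mul_comm, mul_left_comm]
    · simp [Unitization.snd_mul, smul_add, smul_smul, smul_comm, mul_smul_comm,
        mul_comm]⟩

/-- The target algebra. -/
abbrev Tq : Type :=
  (Unitization K (Aq K))ᵐᵒᵖ ⊗[K] Unitization K (Aq K)

/-- The linear map defining `f` on generators. -/
def Φ : (Aq K × Aq K) →ₗ[K] Tq K :=
  ((TensorProduct.mk K (Unitization K (Aq K))ᵐᵒᵖ (Unitization K (Aq K))).flip 1 ∘ₗ
      (opLinearEquiv K).toLinearMap ∘ₗ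
      (Unitization.inrNonUnitalAlgHom K (Aq K) : Aq K →ₗ[K] Unitization K (Aq K)) ∘ₗ
      LinearMap.fst K (Aq K) (Aq K)) +
    (TensorProduct.mk K (Unitization K (Aq K))ᵐᵒᵖ (Unitization K (Aq K)) 1 ∘ₗ
      (Unitization.inrNonUnitalAlgHom K (Aq K) : Aq K →ₗ[K] Unitization K (Aq K)) ∘ₗ
      LinearMap.snd K (Aq K) (Aq K))

lemma Φ_apply (p : Aq K × Aq K) :
    Φ K p = op (p.1 : Unitization K (Aq K)) ⊗ₜ[K] 1 +
      1 ⊗ₜ[K] (p.2 : Unitization K (Aq K)) := rfl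

/-- The algebra map on the tensor algebra. -/
def fT : TensorAlgebra K (Aq K × Aq K) →ₐ[K] Tq K := TensorAlgebra.lift K (Φ K)

lemma fT_l (a : Aq K) :
    fT K (lT K (Aq K) a) = op (a : Unitization K (Aq K)) ⊗ₜ[K] 1 := by
  rw [lT, fT, TensorAlgebra.lift_ι_apply, Φ_apply]
  simp

lemma fT_r (b : Aq K) :
    fT K (rT K (Aq K) b) = 1 ⊗ₜ[K] (b : Unitization K (Aq K)) := by
  rw [rT, fT, TensorAlgebra.lift_ι_apply, Φ_apply]
  simp

lemma fT_rel : ∀ ⦃u v⦄, AltRel K (Aq K) u v → fT K u = fT K v := by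
  intro u v h
  induction h with
  | lsq a =>
    rw [map_mul, fT_l, fT_l, Algebra.TensorProduct.tmul_mul_tmul, mul_one,
      ← op_mul, ← Unitization.inr_mul]
  | rsq b =>
    rw [map_mul, fT_r, fT_r, Algebra.TensorProduct.tmul_mul_tmul, mul_one,
      ← Unitization.inr_mul]
  | lmid a b =>
    rw [map_sub, map_sub, map_mul, map_mul, map_mul, fT_l, fT_l, fT_l, fT_r]
    simp only [Algebra.TensorProduct.tmul_mul_tmul, mul_one, one_mul,
      ← op_mul, ← Unitization.inr_mul, sub_self]
  | rmid a b =>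
    rw [map_sub, map_sub, map_mul, map_mul, map_mul, fT_l, fT_r, fT_r, fT_r]
    simp only [Algebra.TensorProduct.tmul_mul_tmul, mul_one, one_mul,
      ← Unitization.inr_mul, sub_self]

/-- The canonical algebra map `U_Alt(A) → (A₊)ᵒᵖ ⊗ A₊`. -/
def fQ : UAlt K (Aq K) →ₐ[K] Tq K :=
  RingQuot.liftAlgHom K ⟨fT K, fT_rel K⟩

lemma fQ_l (a : Aq K) :
    fQ K (lUAlt K (Aq K) a) = op (a : Unitization K (Aq K)) ⊗ₜ[K] 1 := by
  have h := RingQuot.liftAlgHom_mkAlgHom_apply (S := K) (B := Tq K) (fT K)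
    (s := AltRel K (Aq K)) (fT_rel K) (lT K (Aq K) a)
  exact h.trans (fT_l K a)

lemma fQ_r (b : Aq K) :
    fQ K (rUAlt K (Aq K) b) = 1 ⊗ₜ[K] (b : Unitization K (Aq K)) := by
  have h := RingQuot.liftAlgHom_mkAlgHom_apply (S := K) (B := Tq K) (fT K)
    (s := AltRel K (Aq K)) (fT_rel K) (rT K (Aq K) b)
  exact h.trans (fT_r K b)

/-- `r` as a non-unital algebra hom. -/
def rNA : Aq K →ₙₐ[K] UAlt K (Aq K) where
  toFun := rUAlt K (Aq K)
  map_add' := rU_add K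
  map_smul' c a := by
    show rUAlt K (Aq K) (c • a) = c • rUAlt K (Aq K) a
    exact rU_smul K c a
  map_zero' := rU_zero K
  map_mul' := rU_mul K

/-- `l` as a non-unital algebra hom into the opposite. -/
def lNA : Aq K →ₙₐ[K] (UAlt K (Aq K))ᵐᵒᵖ where
  toFun a := op (lUAlt K (Aq K) a)
  map_add' a b := by
    show op (lUAlt K (Aq K) (a + b)) = op (lUAlt K (Aq K) a) + op (lUAlt K (Aq K) b)
    rw [lU_add, op_add]
  map_smul' c a := by
    show op (lUAlt K (Aq K) (c • a)) = c • op (lUAlt K (Aq K) a)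
    rw [lU_smul, op_smul]
  map_zero' := by
    show op (lUAlt K (Aq K) 0) = 0
    rw [lU_zero, op_zero]
  map_mul' a b := by
    show op (lUAlt K (Aq K) (a * b)) = op (lUAlt K (Aq K) a) * op (lUAlt K (Aq K) b)
    rw [lU_mul, op_mul]

/-- Right part of the inverse. -/
def gR : Unitization K (Aq K) →ₐ[K] UAlt K (Aq K) := (rNA K).toAlgHom

/-- Left part of the inverse. -/
def gL : (Unitization K (Aq K))ᵐᵒᵖ →ₐ[K] UAlt K (Aq K) :=
  ((AlgEquiv.opOp K (UAlt K (Aq K))).symm.toAlgHom).comp (AlgHom.op (lNA K).toAlgHom)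

lemma gR_apply (z : Unitization K (Aq K)) :
    gR K z = algebraMap K (UAlt K (Aq K)) z.fst + rUAlt K (Aq K) z.snd := by
  rw [gR, NonUnitalAlgHom.toAlgHom_apply]; rfl

lemma gL_apply (z : Unitization K (Aq K)) :
    gL K (op z) = algebraMap K (UAlt K (Aq K)) z.fst + lUAlt K (Aq K) z.snd := by
  have h1 : gL K (op z) = unop (unop (op ((lNA K).toAlgHom z))) := rfl
  rw [h1, unop_op, NonUnitalAlgHom.toAlgHom_apply, unop_add]
  rfl

lemma gLR_commute (p : (Unitization K (Aq K))ᵐᵒᵖ) (q : Unitization K (Aq K)) :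
    Commute (gL K p) (gR K q) := by
  rw [← op_unop p, gL_apply, gR_apply]
  refine Commute.add_left (Algebra.commute_algebraMap_left _ _) ?_
  refine Commute.add_right ((Algebra.commute_algebraMap_left _ _).symm) ?_
  exact (comm_all K _ _).symm

/-- The inverse algebra map. -/
def gQ : Tq K →ₐ[K] UAlt K (Aq K) :=
  Algebra.TensorProduct.lift (gL K) (gR K) (gLR_commute K)

lemma gf : ∀ w : UAlt K (Aq K), gQ K (fQ K w) = w := by
  intro w
  obtain ⟨u, rfl⟩ := RingQuot.mkAlgHom_surjective K (AltRel K (Aq K)) w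
  induction u using TensorAlgebra.induction with
  | algebraMap r =>
    erw [AlgHom.commutes, AlgHom.commutes, AlgHom.commutes]
    rfl
  | ι p =>
    obtain ⟨a, b⟩ := p
    have hsplit : ((a, b) : Aq K × Aq K) = (a, 0) + (0, b) := by simp
    rw [hsplit, map_add, map_add]
    rw [show (TensorAlgebra.ι K ((a, 0) : Aq K × Aq K)) = lT K (Aq K) a from rfl,
        show (TensorAlgebra.ι K ((0, b) : Aq K × Aq K)) = rT K (Aq K) b from rfl]
    rw [show RingQuot.mkAlgHom K (AltRel K (Aq K)) (lT K (Aq K) a) = lUAlt K (Aq K) a from rfl,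
        show RingQuot.mkAlgHom K (AltRel K (Aq K)) (rT K (Aq K) b) = rUAlt K (Aq K) b from rfl]
    erw [map_add]; rw [fQ_l, fQ_r, map_add]
    congr 1
    · rw [gQ, Algebra.TensorProduct.lift_tmul, map_one, mul_one, gL_apply]
      simp [Unitization.fst_inr, Unitization.snd_inr, lU_zero]
    · rw [gQ, Algebra.TensorProduct.lift_tmul, map_one, one_mul, gR_apply]
      simp [Unitization.fst_inr, Unitization.snd_inr, rU_zero]
  | mul u v hu hv => rw [map_mul]; erw [map_mul, map_mul]; rw [hu, hv]; rfl
  | add u v hu hv => rw [map_add]; erw [map_add, map_add]; rw [hu, hv]; rfl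

lemma fgL (p : (Unitization K (Aq K))ᵐᵒᵖ) : fQ K (gL K p) = p ⊗ₜ[K] 1 := by
  rw [← op_unop p, gL_apply, map_add, AlgHom.commutes, fQ_l]
  rw [Algebra.TensorProduct.algebraMap_apply, MulOpposite.algebraMap_apply,
    Unitization.algebraMap_eq_inl]
  rw [← TensorProduct.add_tmul, ← op_add, Unitization.inl_fst_add_inr_snd_eq]

lemma fgR (q : Unitization K (Aq K)) : fQ K (gR K q) = 1 ⊗ₜ[K] q := by
  rw [gR_apply, map_add, AlgHom.commutes, fQ_r]
  rw [Algebra.TensorProduct.algebraMap_apply', Unitization.algebraMap_eq_inl]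
  rw [← TensorProduct.tmul_add, Unitization.inl_fst_add_inr_snd_eq]

lemma fg : ∀ z : Tq K, fQ K (gQ K z) = z := by
  intro z
  induction z using TensorProduct.induction_on with
  | zero => rw [map_zero, map_zero]
  | tmul p q =>
    rw [gQ, Algebra.TensorProduct.lift_tmul, map_mul, fgL, fgR,
      Algebra.TensorProduct.tmul_mul_tmul, mul_one, one_mul]
  | add u v hu hv => rw [map_add, map_add, hu, hv]

lemma fQ_bijective : Function.Bijective (fQ K) :=
  Function.bijective_iff_has_inverse.mpr ⟨gQ K, gf K, fg K⟩

instance : Module.Finite K (Aq K) := Module.Finite.of_basis (pb K).basis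

lemma finrank_Aq : Module.finrank K (Aq K) = 2 := by
  rw [(pb K).finrank, pb_dim]

/-- The unitization is linearly just a product. -/
def uEquiv : Unitization K (Aq K) ≃ₗ[K] K × Aq K where
  toFun z := (z.fst, z.snd)
  invFun p := Unitization.inl p.1 + (p.2 : Unitization K (Aq K))
  map_add' _ _ := rfl
  map_smul' _ _ := rfl
  left_inv z := Unitization.inl_fst_add_inr_snd_eq z
  right_inv p := by
    obtain ⟨r, a⟩ := p
    simp [Prod.ext_iff]

instance : Module.Finite K (Unitization K (Aq K)) :=
  Module.Finite.equiv (uEquiv K).symm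

lemma finrank_unitization : Module.finrank K (Unitization K (Aq K)) = 3 := by
  rw [(uEquiv K).finrank_eq, Module.finrank_prod, Module.finrank_self, finrank_Aq]

instance : Module.Finite K (Unitization K (Aq K))ᵐᵒᵖ :=
  Module.Finite.equiv (opLinearEquiv K :
    Unitization K (Aq K) ≃ₗ[K] (Unitization K (Aq K))ᵐᵒᵖ)

lemma finrank_unitization_op :
    Module.finrank K (Unitization K (Aq K))ᵐᵒᵖ = 3 := by
  rw [← (opLinearEquiv K :
      Unitization K (Aq K) ≃ₗ[K] (Unitization K (Aq K))ᵐᵒᵖ).finrank_eq]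
  exact finrank_unitization K

lemma finrank_Tq : Module.finrank K (Tq K) = 9 := by
  rw [Module.finrank_tensorProduct, finrank_unitization_op, finrank_unitization]

lemma finrank_UAlt : Module.finrank K (UAlt K (Aq K)) = 9 := by
  have h := (AlgEquiv.ofBijective (fQ K) (fQ_bijective K)).toLinearEquiv.finrank_eq
  rw [h]
  exact finrank_Tq K

end UAltProofAux

/-- For `K` a field and `A = K[X]/(X² + 1)` regarded as a nonunital associative
`K`-algebra, the canonical map `U_Alt(A) → (A₊)ᵒᵖ ⊗_K A₊`, `l_a ↦ aᵒᵖ ⊗ 1`,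
`r_b ↦ 1 ⊗ b`, is an isomorphism; in particular `dim_K U_Alt(A) = 9`. -/
theorem uAlt_adjoinRootXsqAddOne (K : Type) [Field K] :
    (∃ f : UAlt K (AdjoinRoot (X ^ 2 + 1 : K[X])) →ₐ[K]
        (Unitization K (AdjoinRoot (X ^ 2 + 1 : K[X])))ᵐᵒᵖ ⊗[K]
          Unitization K (AdjoinRoot (X ^ 2 + 1 : K[X])),
      (∀ a, f (lUAlt K (AdjoinRoot (X ^ 2 + 1 : K[X])) a) =
          MulOpposite.op (a : Unitization K (AdjoinRoot (X ^ 2 + 1 : K[X]))) ⊗ₜ[K] 1) ∧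
      (∀ b, f (rUAlt K (AdjoinRoot (X ^ 2 + 1 : K[X])) b) =
          1 ⊗ₜ[K] (b : Unitization K (AdjoinRoot (X ^ 2 + 1 : K[X])))) ∧
      Function.Bijective f) ∧
    Module.finrank K (UAlt K (AdjoinRoot (X ^ 2 + 1 : K[X]))) = 9 := by
  refine ⟨⟨UAltProofAux.fQ K, UAltProofAux.fQ_l K, UAltProofAux.fQ_r K,
    UAltProofAux.fQ_bijective K⟩, UAltProofAux.finrank_UAlt K⟩

end
end

section
/- Let f : K → L be a homomorphism of commutative rings and let A be a K-module with a K-bilinear product. Equip L ⊗_K A with the induced L-bilinear product. Then there is an isomorphism of unital L-algebras L ⊗_K U_Alt,K(A) ≅ U_Alt,L(L ⊗_K A) carrying 1 ⊗ (class of l_a) to the class of l_{1⊗a} and 1 ⊗ (class of r_a) to the class of r_{1⊗a} for all a ∈ A. -/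
noncomputable section

open scoped TensorProduct

set_option linter.unusedSectionVars false

-- aux
section Aux
variable (R A : Type) [CommRing R] [NonUnitalNonAssocRing A] [Module R A]

def lLin : A →ₗ[R] UAlt R A :=
  (RingQuot.mkAlgHom R (AltRel R A)).toLinearMap ∘ₗ (TensorAlgebra.ι R) ∘ₗ (LinearMap.inl R A A)
def rLin : A →ₗ[R] UAlt R A :=
  (RingQuot.mkAlgHom R (AltRel R A)).toLinearMap ∘ₗ (TensorAlgebra.ι R) ∘ₗ (LinearMap.inr R A A)

@[simp] lemma lLin_apply (a : A) : lLin R A a = lUAlt R A a := rfl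
@[simp] lemma rLin_apply (a : A) : rLin R A a = rUAlt R A a := rfl

lemma lsq' (a : A) : lUAlt R A (a * a) = lUAlt R A a * lUAlt R A a := by
  have h := RingQuot.mkAlgHom_rel R (AltRel.lsq (R := R) (A := A) a)
  simp only [map_mul] at h; exact h
lemma rsq' (b : A) : rUAlt R A (b * b) = rUAlt R A b * rUAlt R A b := by
  have h := RingQuot.mkAlgHom_rel R (AltRel.rsq (R := R) (A := A) b)
  simp only [map_mul] at h; exact h
lemma lmid' (a b : A) : lUAlt R A (a * b) - lUAlt R A b * lUAlt R A a =
    rUAlt R A b * lUAlt R A a - lUAlt R A a * rUAlt R A b := by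
  have h := RingQuot.mkAlgHom_rel R (AltRel.lmid (R := R) (A := A) a b)
  simp only [map_mul, map_sub] at h; exact h
lemma rmid' (a b : A) : rUAlt R A b * lUAlt R A a - lUAlt R A a * rUAlt R A b =
    rUAlt R A a * rUAlt R A b - rUAlt R A (a * b) := by
  have h := RingQuot.mkAlgHom_rel R (AltRel.rmid (R := R) (A := A) a b)
  simp only [map_mul, map_sub] at h; exact h

@[simp] lemma lUAlt_zero : lUAlt R A 0 = 0 := by
  rw [← lLin_apply, map_zero]
@[simp] lemma rUAlt_zero : rUAlt R A 0 = 0 := by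
  rw [← rLin_apply, map_zero]

lemma lUAlt_add (a b : A) : lUAlt R A (a + b) = lUAlt R A a + lUAlt R A b := by
  simp [← lLin_apply, map_add]
lemma rUAlt_add (a b : A) : rUAlt R A (a + b) = rUAlt R A a + rUAlt R A b := by
  simp [← rLin_apply, map_add]

lemma lpol (a b : A) : lUAlt R A (a * b) + lUAlt R A (b * a) =
    lUAlt R A a * lUAlt R A b + lUAlt R A b * lUAlt R A a := by
  have h := lsq' R A (a + b)
  rw [mul_add, add_mul, add_mul, lUAlt_add, lUAlt_add, lUAlt_add, lsq', lsq', lUAlt_add, mul_add,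
    add_mul, add_mul] at h
  linear_combination (norm := abel1) h

lemma rpol (a b : A) : rUAlt R A (a * b) + rUAlt R A (b * a) =
    rUAlt R A a * rUAlt R A b + rUAlt R A b * rUAlt R A a := by
  have h := rsq' R A (a + b)
  rw [mul_add, add_mul, add_mul, rUAlt_add, rUAlt_add, rUAlt_add, rsq', rsq', rUAlt_add, mul_add,
    add_mul, add_mul] at h
  linear_combination (norm := abel1) h
end Aux

section BC
variable (K L A : Type) [CommRing K] [CommRing L] [Algebra K L]
    [NonUnitalNonAssocRing A] [Module K A] [SMulCommClass K A A] [IsScalarTower K A A]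

/-- `l ⊗ a ↦ l ⊗ l_a`. -/
def lamBC : L ⊗[K] A →ₗ[L] L ⊗[K] UAlt K A := LinearMap.baseChange L (lLin K A)
/-- `l ⊗ a ↦ l ⊗ r_a`. -/
def rhoBC : L ⊗[K] A →ₗ[L] L ⊗[K] UAlt K A := LinearMap.baseChange L (rLin K A)

@[simp] lemma lamBC_tmul (l : L) (a : A) : lamBC K L A (l ⊗ₜ a) = l ⊗ₜ lUAlt K A a := rfl
@[simp] lemma rhoBC_tmul (l : L) (a : A) : rhoBC K L A (l ⊗ₜ a) = l ⊗ₜ rUAlt K A a := rfl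

lemma lamBC_pol (x y : L ⊗[K] A) :
    lamBC K L A (x * y) + lamBC K L A (y * x) =
      lamBC K L A x * lamBC K L A y + lamBC K L A y * lamBC K L A x := by
  induction x using TensorProduct.induction_on with
  | zero => simp
  | tmul l a =>
    induction y using TensorProduct.induction_on with
    | zero => simp
    | tmul m b =>
      simp only [Algebra.TensorProduct.tmul_mul_tmul, lamBC_tmul]
      rw [mul_comm m l, ← TensorProduct.tmul_add, ← TensorProduct.tmul_add]
      exact congrArg _ (lpol K A a b)
    | add y₁ y₂ ih1 ih2 =>
      simp only [mul_add, add_mul, map_add] at ih1 ih2 ⊢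
      linear_combination (norm := abel1) ih1 + ih2
  | add x₁ x₂ ih1 ih2 =>
    simp only [mul_add, add_mul, map_add] at ih1 ih2 ⊢
    linear_combination (norm := abel1) ih1 + ih2

lemma rhoBC_pol (x y : L ⊗[K] A) :
    rhoBC K L A (x * y) + rhoBC K L A (y * x) =
      rhoBC K L A x * rhoBC K L A y + rhoBC K L A y * rhoBC K L A x := by
  induction x using TensorProduct.induction_on with
  | zero => simp
  | tmul l a =>
    induction y using TensorProduct.induction_on with
    | zero => simp
    | tmul m b =>
      simp only [Algebra.TensorProduct.tmul_mul_tmul, rhoBC_tmul]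
      rw [mul_comm m l, ← TensorProduct.tmul_add, ← TensorProduct.tmul_add]
      exact congrArg _ (rpol K A a b)
    | add y₁ y₂ ih1 ih2 =>
      simp only [mul_add, add_mul, map_add] at ih1 ih2 ⊢
      linear_combination (norm := abel1) ih1 + ih2
  | add x₁ x₂ ih1 ih2 =>
    simp only [mul_add, add_mul, map_add] at ih1 ih2 ⊢
    linear_combination (norm := abel1) ih1 + ih2

lemma lamBC_sq (x : L ⊗[K] A) : lamBC K L A (x * x) = lamBC K L A x * lamBC K L A x := by
  induction x using TensorProduct.induction_on with
  | zero => simp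
  | tmul l a =>
    simp only [Algebra.TensorProduct.tmul_mul_tmul, lamBC_tmul, lsq' K A a]
  | add x y ih1 ih2 =>
    have h := lamBC_pol K L A x y
    simp only [mul_add, add_mul, map_add, ih1, ih2]
    linear_combination (norm := abel1) h

lemma rhoBC_sq (x : L ⊗[K] A) : rhoBC K L A (x * x) = rhoBC K L A x * rhoBC K L A x := by
  induction x using TensorProduct.induction_on with
  | zero => simp
  | tmul l a =>
    simp only [Algebra.TensorProduct.tmul_mul_tmul, rhoBC_tmul, rsq' K A a]
  | add x y ih1 ih2 =>
    have h := rhoBC_pol K L A x y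
    simp only [mul_add, add_mul, map_add, ih1, ih2]
    linear_combination (norm := abel1) h

lemma lamBC_mid (x y : L ⊗[K] A) :
    lamBC K L A (x * y) - lamBC K L A y * lamBC K L A x =
      rhoBC K L A y * lamBC K L A x - lamBC K L A x * rhoBC K L A y := by
  induction x using TensorProduct.induction_on with
  | zero => simp
  | tmul l a =>
    induction y using TensorProduct.induction_on with
    | zero => simp
    | tmul m b =>
      simp only [Algebra.TensorProduct.tmul_mul_tmul, lamBC_tmul, rhoBC_tmul]
      rw [mul_comm m l, ← TensorProduct.tmul_sub, ← TensorProduct.tmul_sub]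
      exact congrArg _ (lmid' K A a b)
    | add y₁ y₂ ih1 ih2 =>
      simp only [mul_add, add_mul, map_add] at ih1 ih2 ⊢
      linear_combination (norm := abel1) ih1 + ih2
  | add x₁ x₂ ih1 ih2 =>
    simp only [mul_add, add_mul, map_add] at ih1 ih2 ⊢
    linear_combination (norm := abel1) ih1 + ih2

lemma rhoBC_mid (x y : L ⊗[K] A) :
    rhoBC K L A y * lamBC K L A x - lamBC K L A x * rhoBC K L A y =
      rhoBC K L A x * rhoBC K L A y - rhoBC K L A (x * y) := by
  induction x using TensorProduct.induction_on with
  | zero => simp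
  | tmul l a =>
    induction y using TensorProduct.induction_on with
    | zero => simp
    | tmul m b =>
      simp only [Algebra.TensorProduct.tmul_mul_tmul, lamBC_tmul, rhoBC_tmul]
      rw [mul_comm m l, ← TensorProduct.tmul_sub, ← TensorProduct.tmul_sub]
      exact congrArg _ (rmid' K A a b)
    | add y₁ y₂ ih1 ih2 =>
      simp only [mul_add, add_mul, map_add] at ih1 ih2 ⊢
      linear_combination (norm := abel1) ih1 + ih2
  | add x₁ x₂ ih1 ih2 =>
    simp only [mul_add, add_mul, map_add] at ih1 ih2 ⊢
    linear_combination (norm := abel1) ih1 + ih2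

end BC

section BC2
variable (K L A : Type) [CommRing K] [CommRing L] [Algebra K L]
    [NonUnitalNonAssocRing A] [Module K A] [SMulCommClass K A A] [IsScalarTower K A A]

instance : Algebra K (UAlt L (L ⊗[K] A)) :=
  inferInstanceAs (Algebra K (RingQuot (AltRel L (L ⊗[K] A))))
instance : IsScalarTower K L (UAlt L (L ⊗[K] A)) :=
  inferInstanceAs (IsScalarTower K L (RingQuot (AltRel L (L ⊗[K] A))))

/-- `Tens_L((L⊗A) ⊕ (L⊗A)) → L ⊗ U_Alt,K(A)`. -/
def psiL : TensorAlgebra L ((L ⊗[K] A) × (L ⊗[K] A)) →ₐ[L] L ⊗[K] UAlt K A :=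
  TensorAlgebra.lift L (LinearMap.coprod (lamBC K L A) (rhoBC K L A))

@[simp] lemma psiL_lT (x : L ⊗[K] A) :
    psiL K L A (lT L (L ⊗[K] A) x) = lamBC K L A x := by
  simp [psiL, lT, TensorAlgebra.lift_ι_apply]
@[simp] lemma psiL_rT (x : L ⊗[K] A) :
    psiL K L A (rT L (L ⊗[K] A) x) = rhoBC K L A x := by
  simp [psiL, rT, TensorAlgebra.lift_ι_apply]

lemma psiL_rel : ∀ ⦃x y⦄, AltRel L (L ⊗[K] A) x y → psiL K L A x = psiL K L A y := by
  intro x y h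
  cases h with
  | lsq a => rw [map_mul, psiL_lT, psiL_lT]; exact lamBC_sq K L A a
  | rsq b => rw [map_mul, psiL_rT, psiL_rT]; exact rhoBC_sq K L A b
  | lmid a b =>
    simp only [map_sub, map_mul, psiL_lT, psiL_rT]; exact lamBC_mid K L A a b
  | rmid a b =>
    simp only [map_sub, map_mul, psiL_lT, psiL_rT]; exact rhoBC_mid K L A a b

/-- `U_Alt,L(L⊗A) → L ⊗ U_Alt,K(A)`. -/
def GG : UAlt L (L ⊗[K] A) →ₐ[L] L ⊗[K] UAlt K A :=
  RingQuot.liftAlgHom L ⟨psiL K L A, psiL_rel K L A⟩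

@[simp] lemma GG_lUAlt (x : L ⊗[K] A) :
    GG K L A (lUAlt L (L ⊗[K] A) x) = lamBC K L A x := by
  rw [lUAlt, GG]
  exact (RingQuot.liftAlgHom_mkAlgHom_apply _ _ _ _).trans (psiL_lT K L A x)
@[simp] lemma GG_rUAlt (x : L ⊗[K] A) :
    GG K L A (rUAlt L (L ⊗[K] A) x) = rhoBC K L A x := by
  rw [rUAlt, GG]
  exact (RingQuot.liftAlgHom_mkAlgHom_apply _ _ _ _).trans (psiL_rT K L A x)

/-- `a ↦ l_{1⊗a}`. -/
def jl : A →ₗ[K] UAlt L (L ⊗[K] A) :=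
  ((lLin L (L ⊗[K] A)).restrictScalars K) ∘ₗ (TensorProduct.mk K L A 1)
def jr : A →ₗ[K] UAlt L (L ⊗[K] A) :=
  ((rLin L (L ⊗[K] A)).restrictScalars K) ∘ₗ (TensorProduct.mk K L A 1)

@[simp] lemma jl_apply (a : A) : jl K L A a = lUAlt L (L ⊗[K] A) (1 ⊗ₜ a) := rfl
@[simp] lemma jr_apply (a : A) : jr K L A a = rUAlt L (L ⊗[K] A) (1 ⊗ₜ a) := rfl

def psiK : TensorAlgebra K (A × A) →ₐ[K] UAlt L (L ⊗[K] A) :=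
  TensorAlgebra.lift K (LinearMap.coprod (jl K L A) (jr K L A))

@[simp] lemma psiK_lT (a : A) :
    psiK K L A (lT K A a) = lUAlt L (L ⊗[K] A) (1 ⊗ₜ a) := by
  simp [psiK, lT, TensorAlgebra.lift_ι_apply]
@[simp] lemma psiK_rT (a : A) :
    psiK K L A (rT K A a) = rUAlt L (L ⊗[K] A) (1 ⊗ₜ a) := by
  simp [psiK, rT, TensorAlgebra.lift_ι_apply]

lemma one_tmul_mul (a b : A) :
    ((1 : L) ⊗ₜ[K] a) * ((1 : L) ⊗ₜ[K] b) = (1 : L) ⊗ₜ[K] (a * b) := by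
  rw [Algebra.TensorProduct.tmul_mul_tmul, one_mul]

lemma psiK_rel : ∀ ⦃x y⦄, AltRel K A x y → psiK K L A x = psiK K L A y := by
  intro x y h
  cases h with
  | lsq a =>
    rw [map_mul, psiK_lT, psiK_lT, ← one_tmul_mul, lsq']
  | rsq b =>
    rw [map_mul, psiK_rT, psiK_rT, ← one_tmul_mul, rsq']
  | lmid a b =>
    simp only [map_sub, map_mul, psiK_lT, psiK_rT, ← one_tmul_mul K L A a b]
    exact lmid' L (L ⊗[K] A) _ _
  | rmid a b =>
    simp only [map_sub, map_mul, psiK_lT, psiK_rT, ← one_tmul_mul K L A a b]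
    exact rmid' L (L ⊗[K] A) _ _

def phi : UAlt K A →ₐ[K] UAlt L (L ⊗[K] A) :=
  RingQuot.liftAlgHom K ⟨psiK K L A, psiK_rel K L A⟩

@[simp] lemma phi_lUAlt (a : A) :
    phi K L A (lUAlt K A a) = lUAlt L (L ⊗[K] A) (1 ⊗ₜ a) := by
  rw [lUAlt, phi]
  exact (RingQuot.liftAlgHom_mkAlgHom_apply _ _ _ _).trans (psiK_lT K L A a)
@[simp] lemma phi_rUAlt (a : A) :
    phi K L A (rUAlt K A a) = rUAlt L (L ⊗[K] A) (1 ⊗ₜ a) := by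
  rw [rUAlt, phi]
  exact (RingQuot.liftAlgHom_mkAlgHom_apply _ _ _ _).trans (psiK_rT K L A a)

def FF : L ⊗[K] UAlt K A →ₐ[L] UAlt L (L ⊗[K] A) :=
  Algebra.TensorProduct.lift (Algebra.ofId L _) (phi K L A)
    (fun x y => Algebra.commute_algebraMap_left x _)

@[simp] lemma FF_tmul (l : L) (u : UAlt K A) :
    FF K L A (l ⊗ₜ u) = algebraMap L _ l * phi K L A u :=
  Algebra.TensorProduct.lift_tmul ..

lemma FF_lam (x : L ⊗[K] A) : FF K L A (lamBC K L A x) = lUAlt L (L ⊗[K] A) x := by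
  induction x using TensorProduct.induction_on with
  | zero => simp [← lLin_apply]
  | tmul l a =>
    rw [lamBC_tmul, FF_tmul, phi_lUAlt, ← Algebra.smul_def, ← lLin_apply, ← lLin_apply,
      ← map_smul, TensorProduct.smul_tmul', smul_eq_mul, mul_one]
  | add x y ih1 ih2 => simp only [map_add, ih1, ih2, ← lLin_apply]

lemma FF_rho (x : L ⊗[K] A) : FF K L A (rhoBC K L A x) = rUAlt L (L ⊗[K] A) x := by
  induction x using TensorProduct.induction_on with
  | zero => simp [← rLin_apply]
  | tmul l a =>
    rw [rhoBC_tmul, FF_tmul, phi_rUAlt, ← Algebra.smul_def, ← rLin_apply, ← rLin_apply,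
      ← map_smul, TensorProduct.smul_tmul', smul_eq_mul, mul_one]
  | add x y ih1 ih2 => simp only [map_add, ih1, ih2, ← rLin_apply]

end BC2

section BC3
variable (K L A : Type) [CommRing K] [CommRing L] [Algebra K L]
    [NonUnitalNonAssocRing A] [Module K A] [SMulCommClass K A A] [IsScalarTower K A A]

lemma FF_GG : (FF K L A).comp (GG K L A) = AlgHom.id L (UAlt L (L ⊗[K] A)) := by
  apply RingQuot.ringQuot_ext'
  apply TensorAlgebra.hom_ext
  apply LinearMap.ext
  rintro ⟨u, v⟩
  have h : (u, v) = ((u, 0) : (L ⊗[K] A) × (L ⊗[K] A)) + (0, v) := by simp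
  simp only [LinearMap.comp_apply, AlgHom.toLinearMap_apply, AlgHom.comp_apply, AlgHom.id_apply]
  rw [h, map_add, map_add]
  show FF K L A (GG K L A (lUAlt L (L ⊗[K] A) u)) + FF K L A (GG K L A (rUAlt L (L ⊗[K] A) v)) =
    RingQuot.mkAlgHom L (AltRel L (L ⊗[K] A)) (TensorAlgebra.ι L (u, 0) + TensorAlgebra.ι L (0, v))
  rw [GG_lUAlt, GG_rUAlt, FF_lam, FF_rho, map_add]
  rfl

lemma GG_phi : ∀ t : UAlt K A, GG K L A (phi K L A t) = 1 ⊗ₜ t := by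
  have key : ((GG K L A).restrictScalars K).comp (phi K L A) =
      Algebra.TensorProduct.includeRight := by
    apply RingQuot.ringQuot_ext'
    apply TensorAlgebra.hom_ext
    apply LinearMap.ext
    rintro ⟨a, b⟩
    have h : (a, b) = ((a, 0) : A × A) + (0, b) := by simp
    simp only [LinearMap.comp_apply, AlgHom.toLinearMap_apply, AlgHom.comp_apply,
      AlgHom.coe_restrictScalars']
    rw [h, map_add, map_add]
    show GG K L A (phi K L A (lUAlt K A a)) + GG K L A (phi K L A (rUAlt K A b)) =
      Algebra.TensorProduct.includeRight
        (RingQuot.mkAlgHom K (AltRel K A) (TensorAlgebra.ι K (a, 0) + TensorAlgebra.ι K (0, b)))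
    rw [phi_lUAlt, phi_rUAlt, GG_lUAlt, GG_rUAlt,
      lamBC_tmul, rhoBC_tmul, ← TensorProduct.tmul_add]
    exact congrArg (fun t => (1 : L) ⊗ₜ[K] t) (map_add (RingQuot.mkAlgHom K (AltRel K A)) _ _).symm
  intro t
  exact AlgHom.congr_fun key t

lemma GG_FF : (GG K L A).comp (FF K L A) = AlgHom.id L (L ⊗[K] UAlt K A) := by
  apply AlgHom.ext
  intro z
  induction z using TensorProduct.induction_on with
  | zero => simp
  | tmul l u =>
    simp only [AlgHom.comp_apply, AlgHom.id_apply, FF_tmul, map_mul, AlgHom.commutes, GG_phi]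
    rw [Algebra.TensorProduct.algebraMap_apply, Algebra.TensorProduct.tmul_mul_tmul,
      mul_one, one_mul, Algebra.algebraMap_self_apply]
  | add x y ih1 ih2 => simp only [map_add, AlgHom.comp_apply, AlgHom.id_apply] at ih1 ih2 ⊢
                       rw [ih1, ih2]

end BC3


/-- Base change for the alternative universal enveloping algebra: for a ring map
`K → L` and a `K`-module `A` with `K`-bilinear product,
`L ⊗_K U_Alt,K(A) ≅ U_Alt,L(L ⊗_K A)` as unital `L`-algebras, carrying
`1 ⊗ l_a` to `l_{1⊗a}` and `1 ⊗ r_a` to `r_{1⊗a}`. -/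
theorem uAlt_baseChange (K L A : Type) [CommRing K] [CommRing L] [Algebra K L]
    [NonUnitalNonAssocRing A] [Module K A] [SMulCommClass K A A] [IsScalarTower K A A] :
    ∃ e : L ⊗[K] UAlt K A ≃ₐ[L] UAlt L (L ⊗[K] A),
      (∀ a : A, e (1 ⊗ₜ[K] lUAlt K A a) = lUAlt L (L ⊗[K] A) ((1 : L) ⊗ₜ[K] a)) ∧
      (∀ a : A, e (1 ⊗ₜ[K] rUAlt K A a) = rUAlt L (L ⊗[K] A) ((1 : L) ⊗ₜ[K] a)) := by
  refine ⟨AlgEquiv.ofAlgHom (FF K L A) (GG K L A) (FF_GG K L A) (GG_FF K L A), ?_, ?_⟩ <;>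
    intro a <;>
    simp [FF_tmul]


end
end
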